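/- arXiv:1211.1149 — 4 statements merged into one kernel-verified Lean document; each statement's English description precedes it below -/
import Mathlib

section
/- Let X_1,...,X_n be independent random variables taking values in [0,C] with C ≥ 1, let X be their sum, and let μ:[0,∞)→[0,1] be a function with μ(x)=0 for x ≥ C. If E[μ(X)] ≥ ε for some 0 < ε < 1/2, then E[X] ≤ 3C/ε. -/
open MeasureTheory ProbabilityTheory

/-- If `E[u(X)] ≥ ε` for a `[0,1]`-valued utility `u` vanishing on `[C, ∞)` with `C ≥ 1`,
and `X` is the sum of independent `[0,C]`-valued random variables, then `E[X] ≤ 3C/ε`. -/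
theorem expectation_le_of_utility_ge
    {Ω : Type*} [MeasurableSpace Ω] (μ : Measure Ω) [IsProbabilityMeasure μ]
    {n : ℕ} (X : Fin n → Ω → ℝ) (C ε : ℝ) (hC : 1 ≤ C) (hε : 0 < ε) (hε2 : ε < 1/2)
    (hmeas : ∀ i, Measurable (X i))
    (hindep : iIndepFun X μ)
    (hbound : ∀ i, ∀ᵐ ω ∂μ, X i ω ∈ Set.Icc 0 C)
    (u : ℝ → ℝ) (hu_meas : Measurable u)
    (hu01 : ∀ x, u x ∈ Set.Icc (0:ℝ) 1)
    (hu0 : ∀ x, C ≤ x → u x = 0)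
    (hEu : ε ≤ μ[fun ω => u (∑ i, X i ω)]) :
    μ[fun ω => ∑ i, X i ω] ≤ 3 * C / ε := by
  set S : Ω → ℝ := fun ω => ∑ i, X i ω with hSdef
  have hSmeas : Measurable S := Finset.measurable_sum _ fun i _ => hmeas i
  have hXi2 : ∀ i, MemLp (X i) 2 μ := fun i =>
    MemLp.of_bound (hmeas i).aestronglyMeasurable C <| by
      filter_upwards [hbound i] with ω hω
      rw [Real.norm_eq_abs, abs_le]
      exact ⟨by linarith [hω.1], hω.2⟩
  have hXint : ∀ i, Integrable (X i) μ := fun i => (hXi2 i).integrable one_le_two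
  have hSint : Integrable S μ := integrable_finset_sum _ fun i _ => hXint i
  set m : ℝ := μ[S] with hm
  -- step 1 : ε ≤ Pr[S < C]
  have huS_int : Integrable (fun ω => u (S ω)) μ := by
    refine memLp_one_iff_integrable.mp ?_
    refine MemLp.of_bound ((hu_meas.comp hSmeas).aestronglyMeasurable) 1 ?_
    refine Filter.Eventually.of_forall fun ω => ?_
    rw [Real.norm_eq_abs, abs_le]
    exact ⟨by linarith [(hu01 (S ω)).1], (hu01 (S ω)).2⟩
  have hset : MeasurableSet {ω | S ω < C} := measurableSet_lt hSmeas measurable_const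
  have hind_int : Integrable ({ω | S ω < C}.indicator fun _ => (1:ℝ)) μ :=
    (integrable_const (1:ℝ)).indicator hset
  have hεPr : ε ≤ (μ {ω | S ω < C}).toReal := by
    have h1 : μ[fun ω => u (S ω)] ≤ ∫ ω, {ω | S ω < C}.indicator (fun _ => (1:ℝ)) ω ∂μ := by
      refine integral_mono huS_int hind_int fun ω => ?_
      by_cases hω : S ω < C
      · have hωm : ω ∈ {ω | S ω < C} := hω
        rw [Set.indicator_of_mem hωm]
        exact (hu01 (S ω)).2
      · have hωm : ω ∉ {ω | S ω < C} := hω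
        rw [Set.indicator_of_notMem hωm, hu0 _ (not_lt.mp hω)]
    have h2 : ∫ ω, {ω | S ω < C}.indicator (fun _ => (1:ℝ)) ω ∂μ
        = (μ {ω | S ω < C}).toReal := by
      rw [integral_indicator_const _ hset, smul_eq_mul, mul_one, measureReal_def]
    calc ε ≤ μ[fun ω => u (S ω)] := hEu
      _ ≤ _ := h1
      _ = _ := h2
  -- step 2 : variance bound
  have hVi : ∀ i, variance (X i) μ ≤ C * μ[X i] := by
    intro i
    rw [variance_eq_sub (hXi2 i)]
    have h1 : μ[(X i) ^ 2] ≤ ∫ ω, C * X i ω ∂μ := by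
      refine integral_mono_ae (hXi2 i).integrable_sq ((hXint i).const_mul C) ?_
      filter_upwards [hbound i] with ω hω
      simp only [Pi.pow_apply]
      nlinarith [hω.1, hω.2]
    rw [integral_const_mul] at h1
    nlinarith [sq_nonneg (μ[X i])]
  have hVsum : variance S μ ≤ C * m := by
    have hpair : Set.Pairwise ↑(Finset.univ : Finset (Fin n))
        fun i j => IndepFun (X i) (X j) μ := fun i _ j _ hij => hindep.indepFun hij
    have h1 : variance (∑ i, X i) μ = ∑ i, variance (X i) μ :=
      IndepFun.variance_sum (fun i _ => hXi2 i) hpair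
    have h2 : variance S μ = variance (∑ i, X i) μ := by
      congr 1
      ext ω
      simp [hSdef]
    rw [h2, h1, hm, hSdef, integral_finset_sum _ fun i _ => hXint i, Finset.mul_sum]
    exact Finset.sum_le_sum fun i _ => hVi i
  have hVnn : 0 ≤ variance S μ := variance_nonneg _ _
  -- main case split
  by_cases hmC : m ≤ C
  · calc μ[fun ω => ∑ i, X i ω] = m := rfl
      _ ≤ C := hmC
      _ ≤ 3 * C / ε := by
        rw [le_div_iff₀ hε]
        nlinarith
  push_neg at hmC
  -- Chebyshev
  have hc : (0:ℝ) < m - C := by linarith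
  have hS2 : MemLp S 2 μ := by
    have := memLp_finset_sum' (μ := μ) (Finset.univ) (fun i (_ : i ∈ Finset.univ) => hXi2 i)
    have hSeq : (∑ i, X i) = S := by ext ω; simp [hSdef]
    rwa [hSeq] at this
  have hcheb := meas_ge_le_variance_div_sq (μ := μ) hS2 (c := m - C) hc
  have hsub : {ω | S ω < C} ⊆ {ω | m - C ≤ |S ω - μ[S]|} := by
    intro ω hω
    simp only [Set.mem_setOf_eq] at hω ⊢
    rw [abs_sub_comm, ← hm]
    calc m - C ≤ m - S ω := by linarith
      _ ≤ |m - S ω| := le_abs_self _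
  have hkey : ε ≤ variance S μ / (m - C) ^ 2 := by
    have h1 : (μ {ω | S ω < C}).toReal ≤ (μ {ω | m - C ≤ |S ω - μ[S]|}).toReal :=
      ENNReal.toReal_mono (measure_ne_top _ _) (measure_mono hsub)
    have h2 : (μ {ω | m - C ≤ |S ω - μ[S]|}).toReal
        ≤ variance S μ / (m - C) ^ 2 := by
      have := ENNReal.toReal_mono ENNReal.ofReal_ne_top hcheb
      rwa [ENNReal.toReal_ofReal (by positivity)] at this
    linarith [hεPr]
  have hfin : ε * (m - C) ^ 2 ≤ C * m := by
    have h3 : ε * (m - C) ^ 2 ≤ variance S μ := by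
      have := (le_div_iff₀ (by positivity : (0:ℝ) < (m - C) ^ 2)).mp hkey
      linarith
    linarith [hVsum]
  -- conclude
  show m ≤ 3 * C / ε
  rw [le_div_iff₀ hε]
  by_contra hcon
  push_neg at hcon
  have hm0 : (0:ℝ) < m := by linarith
  have h6 : C < m / 6 := by nlinarith
  have h7 : 5 * m / 6 < m - C := by linarith
  have h8 : (5 * m / 6) ^ 2 < (m - C) ^ 2 := by nlinarith
  nlinarith [hfin, mul_lt_mul_of_pos_left hcon hm0]
end

section
/- Le Cam's Poisson approximation theorem: let X_1, X_2, ..., X_n be independent random variables taking values in {0,1,...,K}, let X = ΣX_i, π_i = Pr[X_i ≠ 0], and V_k = Σ_i Pr[X_i = k] for k = 1,...,K, with λ = Σ_i π_i. Let Y be the compound Poisson random variable Y = Σ_{j=1}^{N} Y_j, where N ~ Poisson(λ) and Y_1, Y_2, ... are i.i.d. with Pr[Y_j = k] = V_k/λ for k ∈ {1,...,K}, independent of N. Then Σ_{k≥0} |Pr[X=k] − Pr[Y=k]| ≤ 2 Σ_i π_i². -/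
open MeasureTheory ProbabilityTheory
open PowerSeries Finset

set_option maxHeartbeats 1000000

noncomputable section LeCamAux
namespace LeCamAux

def SAC (F : PowerSeries ℝ) : Prop := Summable (fun k => |coeff k F|)
def NN (F : PowerSeries ℝ) : Prop := ∀ k, 0 ≤ coeff k F
def mass (F : PowerSeries ℝ) : ℝ := ∑' k, coeff k F
def l1 (F : PowerSeries ℝ) : ℝ := ∑' k, |coeff k F|

lemma SAC.summable {F : PowerSeries ℝ} (h : SAC F) : Summable (fun k => coeff k F) :=
  h.of_abs

lemma SAC.congr {F G : PowerSeries ℝ} (h : SAC F) (e : G = F) : SAC G := e ▸ h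

lemma sac_of_nn_summable {F : PowerSeries ℝ} (h1 : NN F)
    (h2 : Summable (fun k => coeff k F)) : SAC F := by
  refine h2.congr fun k => (abs_of_nonneg (h1 k)).symm

lemma SAC.add {F G : PowerSeries ℝ} (hF : SAC F) (hG : SAC G) : SAC (F + G) := by
  have h0 : Summable (fun k => |coeff k F| + |coeff k G|) := Summable.add hF hG
  refine Summable.of_nonneg_of_le (fun k => abs_nonneg _) (fun k => ?_) h0
  simp only [map_add]
  exact abs_add_le _ _

lemma SAC.sub {F G : PowerSeries ℝ} (hF : SAC F) (hG : SAC G) : SAC (F - G) := by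
  have : Summable (fun k => coeff k F - coeff k G) := hF.summable.sub hG.summable
  have := this.abs
  refine this.congr fun k => ?_
  simp [map_sub]

lemma l1_nonneg (F : PowerSeries ℝ) : 0 ≤ l1 F :=
  tsum_nonneg fun k => abs_nonneg _

lemma mass_nonneg {F : PowerSeries ℝ} (h : NN F) : 0 ≤ mass F :=
  tsum_nonneg fun k => h k

lemma l1_eq_mass {F : PowerSeries ℝ} (h : NN F) : l1 F = mass F := by
  unfold l1 mass; exact tsum_congr fun k => abs_of_nonneg (h k)

lemma l1_add_le {F G : PowerSeries ℝ} (hF : SAC F) (hG : SAC G) :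
    l1 (F + G) ≤ l1 F + l1 G := by
  have hF' : Summable (fun k => |coeff k F|) := hF
  have hG' : Summable (fun k => |coeff k G|) := hG
  have h1 : l1 (F + G) ≤ ∑' k, (|coeff k F| + |coeff k G|) := by
    refine Summable.tsum_le_tsum (fun k => ?_) (SAC.add hF hG) (Summable.add hF hG)
    simp only [map_add]; exact abs_add_le _ _
  rw [Summable.tsum_add hF' hG'] at h1
  exact h1

lemma SAC.mul {F G : PowerSeries ℝ} (hF : SAC F) (hG : SAC G) : SAC (F * G) := by
  have := summable_norm_sum_mul_antidiagonal_of_summable_norm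
    (f := fun k => coeff k F) (g := fun k => coeff k G)
    (by simpa [Real.norm_eq_abs, SAC] using hF) (by simpa [Real.norm_eq_abs, SAC] using hG)
  simp only [Real.norm_eq_abs] at this
  refine this.congr fun n => ?_
  rw [PowerSeries.coeff_mul]

lemma mass_mul {F G : PowerSeries ℝ} (hF : SAC F) (hG : SAC G) :
    mass (F * G) = mass F * mass G := by
  have := tsum_mul_tsum_eq_tsum_sum_antidiagonal_of_summable_norm
    (f := fun k => coeff k F) (g := fun k => coeff k G)
    (by simpa [Real.norm_eq_abs, SAC] using hF) (by simpa [Real.norm_eq_abs, SAC] using hG)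
  unfold mass
  rw [this]
  exact tsum_congr fun n => by rw [PowerSeries.coeff_mul]

lemma l1_mul_le {F G : PowerSeries ℝ} (hF : SAC F) (hG : SAC G) :
    l1 (F * G) ≤ l1 F * l1 G := by
  have habs : ∀ n, |coeff n (F * G)|
      ≤ ∑ kl ∈ antidiagonal n, |coeff kl.1 F| * |coeff kl.2 G| := fun n => by
    rw [PowerSeries.coeff_mul]
    exact (Finset.abs_sum_le_sum_abs _ _).trans (le_of_eq (by simp [abs_mul]))
  have hsum2 : Summable (fun n => ∑ kl ∈ antidiagonal n, |coeff kl.1 F| * |coeff kl.2 G|) := by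
    have := summable_norm_sum_mul_antidiagonal_of_summable_norm
      (f := fun k => |coeff k F|) (g := fun k => |coeff k G|)
      (by simpa [Real.norm_eq_abs, abs_abs, SAC] using hF)
      (by simpa [Real.norm_eq_abs, abs_abs, SAC] using hG)
    simp only [Real.norm_eq_abs] at this
    refine this.congr fun n => ?_
    exact abs_of_nonneg (Finset.sum_nonneg fun kl _ => mul_nonneg (abs_nonneg _) (abs_nonneg _))
  have h1 : l1 (F * G) ≤ ∑' n, ∑ kl ∈ antidiagonal n, |coeff kl.1 F| * |coeff kl.2 G| :=
    Summable.tsum_le_tsum habs (SAC.mul hF hG) hsum2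
  have h2 : (∑' k, |coeff k F|) * (∑' k, |coeff k G|)
      = ∑' n, ∑ kl ∈ antidiagonal n, |coeff kl.1 F| * |coeff kl.2 G| :=
    tsum_mul_tsum_eq_tsum_sum_antidiagonal_of_summable_norm
      (by simpa [Real.norm_eq_abs, abs_abs, SAC] using hF)
      (by simpa [Real.norm_eq_abs, abs_abs, SAC] using hG)
  unfold l1
  rw [h2]
  exact h1

lemma NN.mul {F G : PowerSeries ℝ} (hF : NN F) (hG : NN G) : NN (F * G) := by
  intro k
  rw [PowerSeries.coeff_mul]
  exact Finset.sum_nonneg fun kl _ => mul_nonneg (hF _) (hG _)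

lemma SAC.one : SAC (1 : PowerSeries ℝ) := by
  have : Summable (fun k : ℕ => |coeff k (1 : PowerSeries ℝ)|) := by
    apply summable_of_ne_finset_zero (s := {0})
    intro k hk
    simp only [Finset.mem_singleton] at hk
    rw [PowerSeries.coeff_one, if_neg hk, abs_zero]
  exact this

lemma l1_one : l1 (1 : PowerSeries ℝ) = 1 := by
  unfold l1
  rw [tsum_eq_single 0]
  · simp
  · intro k hk; rw [PowerSeries.coeff_one, if_neg hk, abs_zero]

end LeCamAux

open PowerSeries Finset

set_option maxHeartbeats 1000000

noncomputable section LeCamAux2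
namespace LeCamAux

variable {ι : Type*}

lemma SAC.prod (s : Finset ι) (F : ι → PowerSeries ℝ) (h : ∀ i ∈ s, SAC (F i)) :
    SAC (∏ i ∈ s, F i) := by
  classical
  induction s using Finset.cons_induction with
  | empty => simpa using SAC.one
  | cons a s ha ih =>
    rw [Finset.prod_cons]
    exact SAC.mul (h a (Finset.mem_cons_self a s))
      (ih fun i hi => h i (Finset.mem_cons_of_mem hi))

lemma l1_prod_le_one (s : Finset ι) (F : ι → PowerSeries ℝ) (h : ∀ i ∈ s, SAC (F i))
    (h1 : ∀ i ∈ s, l1 (F i) ≤ 1) : l1 (∏ i ∈ s, F i) ≤ 1 := by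
  classical
  induction s using Finset.cons_induction with
  | empty => simpa using le_of_eq l1_one
  | cons a s ha ih =>
    rw [Finset.prod_cons]
    calc l1 (F a * ∏ i ∈ s, F i) ≤ l1 (F a) * l1 (∏ i ∈ s, F i) :=
          l1_mul_le (h a (Finset.mem_cons_self a s))
            (SAC.prod s F fun i hi => h i (Finset.mem_cons_of_mem hi))
      _ ≤ 1 * 1 := by
          apply mul_le_mul (h1 a (Finset.mem_cons_self a s))
            (ih (fun i hi => h i (Finset.mem_cons_of_mem hi))
              (fun i hi => h1 i (Finset.mem_cons_of_mem hi)))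
            (l1_nonneg _) zero_le_one
      _ = 1 := one_mul 1

lemma l1_prod_sub_prod (s : Finset ι) (F G : ι → PowerSeries ℝ)
    (hF : ∀ i ∈ s, SAC (F i)) (hG : ∀ i ∈ s, SAC (G i))
    (hF1 : ∀ i ∈ s, l1 (F i) ≤ 1) (hG1 : ∀ i ∈ s, l1 (G i) ≤ 1) :
    l1 ((∏ i ∈ s, F i) - ∏ i ∈ s, G i) ≤ ∑ i ∈ s, l1 (F i - G i) := by
  classical
  induction s using Finset.cons_induction with
  | empty => simp [l1, tsum_zero]
  | cons a s ha ih =>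
    have hFa := hF a (Finset.mem_cons_self a s)
    have hGa := hG a (Finset.mem_cons_self a s)
    have hFs : ∀ i ∈ s, SAC (F i) := fun i hi => hF i (Finset.mem_cons_of_mem hi)
    have hGs : ∀ i ∈ s, SAC (G i) := fun i hi => hG i (Finset.mem_cons_of_mem hi)
    have hPF := SAC.prod s F hFs
    have hPG := SAC.prod s G hGs
    rw [Finset.prod_cons, Finset.prod_cons, Finset.sum_cons]
    have key : F a * (∏ i ∈ s, F i) - G a * ∏ i ∈ s, G i
        = F a * ((∏ i ∈ s, F i) - ∏ i ∈ s, G i) + (F a - G a) * ∏ i ∈ s, G i := by ring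
    rw [key]
    calc l1 _ ≤ l1 (F a * ((∏ i ∈ s, F i) - ∏ i ∈ s, G i))
            + l1 ((F a - G a) * ∏ i ∈ s, G i) :=
          l1_add_le (SAC.mul hFa (SAC.sub hPF hPG)) (SAC.mul (SAC.sub hFa hGa) hPG)
      _ ≤ l1 (F a) * l1 ((∏ i ∈ s, F i) - ∏ i ∈ s, G i)
            + l1 (F a - G a) * l1 (∏ i ∈ s, G i) := by
          gcongr
          · exact l1_mul_le hFa (SAC.sub hPF hPG)
          · exact l1_mul_le (SAC.sub hFa hGa) hPG
      _ ≤ 1 * (∑ i ∈ s, l1 (F i - G i)) + l1 (F a - G a) * 1 := by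
          gcongr
          · exact l1_nonneg _
          · exact hF1 a (Finset.mem_cons_self a s)
          · exact ih hFs hGs (fun i hi => hF1 i (Finset.mem_cons_of_mem hi))
              (fun i hi => hG1 i (Finset.mem_cons_of_mem hi))
          · exact l1_nonneg _
          · exact l1_prod_le_one s G hGs (fun i hi => hG1 i (Finset.mem_cons_of_mem hi))
      _ = l1 (F a - G a) + ∑ i ∈ s, l1 (F i - G i) := by ring

end LeCamAux

open PowerSeries Finset

set_option maxHeartbeats 1000000

noncomputable section LeCamAux3
namespace LeCamAux

lemma coeff_pow_eq_zero {F : PowerSeries ℝ} (h : constantCoeff F = 0) :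
    ∀ {m k : ℕ}, k < m → coeff k (F ^ m) = 0 := by
  intro m
  induction m with
  | zero => intro k hk; omega
  | succ m ih =>
    intro k hk
    rw [pow_succ, PowerSeries.coeff_mul]
    apply Finset.sum_eq_zero
    intro kl hkl
    rw [Finset.HasAntidiagonal.mem_antidiagonal] at hkl
    by_cases h1 : kl.1 < m
    · rw [ih h1, zero_mul]
    · have : kl.2 = 0 := by omega
      rw [this]
      simp only [PowerSeries.coeff_zero_eq_constantCoeff, h, mul_zero]

lemma coeff_mul_pow_eq_zero {F G : PowerSeries ℝ} (hF : constantCoeff F = 0)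
    (hG : constantCoeff G = 0) {m l k : ℕ} (h : k < m + l) :
    coeff k (F ^ m * G ^ l) = 0 := by
  rw [PowerSeries.coeff_mul]
  apply Finset.sum_eq_zero
  intro kl hkl
  rw [Finset.HasAntidiagonal.mem_antidiagonal] at hkl
  by_cases h1 : kl.1 < m
  · rw [coeff_pow_eq_zero hF h1, zero_mul]
  · have : kl.2 < l := by omega
    rw [coeff_pow_eq_zero hG this, mul_zero]

def Efun (F : PowerSeries ℝ) (k : ℕ) : ℝ :=
  ∑ m ∈ range (k + 1), coeff k (F ^ m) / m.factorial

def Eser (F : PowerSeries ℝ) : PowerSeries ℝ := PowerSeries.mk (Efun F)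

@[simp] lemma coeff_Eser (F : PowerSeries ℝ) (k : ℕ) : coeff k (Eser F) = Efun F k :=
  PowerSeries.coeff_mk k _

lemma Efun_extend {F : PowerSeries ℝ} (h : constantCoeff F = 0) {i k : ℕ} (hik : i ≤ k) :
    Efun F i = ∑ m ∈ range (k + 1), coeff i (F ^ m) / m.factorial := by
  apply Finset.sum_subset (Finset.range_subset_range.2 (by omega))
  intro m _ hm
  rw [Finset.mem_range, not_lt] at hm
  rw [coeff_pow_eq_zero h (by omega), zero_div]

lemma sum_shear {k : ℕ} (h : ℕ → ℕ → ℝ) (hvan : ∀ m l, k < m + l → h m l = 0) :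
    ∑ p ∈ range (k + 1), ∑ m ∈ range (p + 1), h m (p - m)
      = ∑ m ∈ range (k + 1), ∑ l ∈ range (k + 1), h m l := by
  classical
  have h1 : ∀ p, ∑ m ∈ range (p + 1), h m (p - m)
      = ∑ ij ∈ antidiagonal p, h ij.1 ij.2 := fun p =>
    (Finset.Nat.sum_antidiagonal_eq_sum_range_succ h p).symm
  simp_rw [h1]
  have hdisj : (↑(range (k + 1) : Finset ℕ) : Set ℕ).PairwiseDisjoint antidiagonal := by
    intro p _ q _ hpq
    simp only [Function.onFun, Finset.disjoint_left]
    intro ij hij hij'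
    rw [Finset.HasAntidiagonal.mem_antidiagonal] at hij hij'
    omega
  rw [← Finset.sum_biUnion hdisj]
  rw [← Finset.sum_product']
  apply Finset.sum_subset
  · intro ij hij
    rw [Finset.mem_biUnion] at hij
    obtain ⟨p, hp, hij⟩ := hij
    rw [Finset.mem_range] at hp
    rw [Finset.HasAntidiagonal.mem_antidiagonal] at hij
    rw [Finset.mem_product, Finset.mem_range, Finset.mem_range]
    omega
  · intro ij hij hnot
    apply hvan
    by_contra hc
    push_neg at hc
    apply hnot
    rw [Finset.mem_biUnion]
    exact ⟨ij.1 + ij.2, Finset.mem_range.2 (by omega),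
      Finset.HasAntidiagonal.mem_antidiagonal.2 rfl⟩

lemma Eser_add {F G : PowerSeries ℝ} (hF : constantCoeff F = 0)
    (hG : constantCoeff G = 0) : Eser (F + G) = Eser F * Eser G := by
  ext k
  rw [PowerSeries.coeff_mul, coeff_Eser]
  set h : ℕ → ℕ → ℝ := fun m l => coeff k (F ^ m * G ^ l) / (m.factorial * l.factorial)
    with hh
  have hvan : ∀ m l, k < m + l → h m l = 0 := fun m l hml => by
    rw [hh]; simp only
    rw [coeff_mul_pow_eq_zero hF hG hml, zero_div]
  have hRHS : ∑ ij ∈ antidiagonal k, coeff ij.1 (Eser F) * coeff ij.2 (Eser G)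
      = ∑ m ∈ range (k + 1), ∑ l ∈ range (k + 1), h m l := by
    have step1 : ∀ ij ∈ antidiagonal k, coeff ij.1 (Eser F) * coeff ij.2 (Eser G)
        = ∑ m ∈ range (k + 1), ∑ l ∈ range (k + 1),
            (coeff ij.1 (F ^ m) / m.factorial) * (coeff ij.2 (G ^ l) / l.factorial) := by
      intro ij hij
      rw [Finset.HasAntidiagonal.mem_antidiagonal] at hij
      rw [coeff_Eser, coeff_Eser, Efun_extend hF (show ij.1 ≤ k by omega),
        Efun_extend hG (show ij.2 ≤ k by omega), Finset.sum_mul_sum]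
    rw [Finset.sum_congr rfl step1, Finset.sum_comm]
    apply Finset.sum_congr rfl
    intro m _
    rw [Finset.sum_comm]
    apply Finset.sum_congr rfl
    intro l _
    rw [hh]
    simp only
    rw [PowerSeries.coeff_mul, Finset.sum_div]
    apply Finset.sum_congr rfl
    intro ij _
    field_simp
  rw [hRHS, ← sum_shear h hvan]
  unfold Efun
  apply Finset.sum_congr rfl
  intro p hp
  rw [add_pow]
  rw [map_sum, Finset.sum_div]
  apply Finset.sum_congr rfl
  intro m hm
  rw [Finset.mem_range] at hm
  rw [hh]
  simp only
  rw [show ((p.choose m : ℕ) : ℝ⟦X⟧) = PowerSeries.C ((p.choose m : ℕ) : ℝ) from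
    (map_natCast (PowerSeries.C (R := ℝ)) _).symm, PowerSeries.coeff_mul_C]
  have hfac : ((p.choose m : ℝ)) * (m.factorial : ℝ) * ((p - m).factorial : ℝ)
      = (p.factorial : ℝ) := by
    exact_mod_cast congrArg (Nat.cast (R := ℝ))
      (Nat.choose_mul_factorial_mul_factorial (by omega : m ≤ p))
  have hm0 : (m.factorial : ℝ) ≠ 0 := Nat.cast_ne_zero.2 (Nat.factorial_ne_zero m)
  have hl0 : ((p - m).factorial : ℝ) ≠ 0 := Nat.cast_ne_zero.2 (Nat.factorial_ne_zero _)
  have hp0 : (p.factorial : ℝ) ≠ 0 := Nat.cast_ne_zero.2 (Nat.factorial_ne_zero p)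
  field_simp
  linear_combination (coeff k) (F ^ m * G ^ (p - m)) * hfac

end LeCamAux

open PowerSeries Finset

set_option maxHeartbeats 1000000

noncomputable section LeCamAux4
namespace LeCamAux

lemma NN.one : NN (1 : PowerSeries ℝ) := by
  intro k
  rw [PowerSeries.coeff_one]
  split <;> norm_num

lemma NN.pow {F : PowerSeries ℝ} (h : NN F) (m : ℕ) : NN (F ^ m) := by
  induction m with
  | zero => simpa using NN.one
  | succ m ih => rw [pow_succ]; exact NN.mul ih h

lemma FS.pow {F : PowerSeries ℝ} {K : ℕ} (h : ∀ k, K < k → coeff k F = 0) (m : ℕ) :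
    ∀ k, K * m < k → coeff k (F ^ m) = 0 := by
  induction m with
  | zero =>
    intro k hk
    rw [pow_zero, PowerSeries.coeff_one, if_neg]
    omega
  | succ m ih =>
    intro k hk
    rw [pow_succ, PowerSeries.coeff_mul]
    apply Finset.sum_eq_zero
    intro kl hkl
    rw [Finset.HasAntidiagonal.mem_antidiagonal] at hkl
    by_cases h1 : K * m < kl.1
    · rw [ih kl.1 h1, zero_mul]
    · have hms : K * (m + 1) = K * m + K := by ring
      have : K < kl.2 := by omega
      rw [h kl.2 this, mul_zero]

lemma FS.sac {F : PowerSeries ℝ} {K : ℕ} (h : ∀ k, K < k → coeff k F = 0) : SAC F := by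
  apply summable_of_ne_finset_zero (s := range (K + 1))
  intro k hk
  rw [Finset.mem_range, not_lt] at hk
  rw [h k (by omega), abs_zero]

lemma SAC.pow {F : PowerSeries ℝ} (h : SAC F) (m : ℕ) : SAC (F ^ m) := by
  induction m with
  | zero => simpa using SAC.one
  | succ m ih => rw [pow_succ]; exact SAC.mul ih h

lemma mass_pow {F : PowerSeries ℝ} (h : SAC F) (m : ℕ) : mass (F ^ m) = mass F ^ m := by
  induction m with
  | zero =>
    rw [pow_zero, pow_zero]
    unfold mass
    rw [tsum_eq_single 0]
    · simp
    · intro k hk; rw [PowerSeries.coeff_one, if_neg hk]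
  | succ m ih =>
    rw [pow_succ, pow_succ, mass_mul (SAC.pow h m) h, ih]

/-- Key summability and mass computation for the exponential of a power series with
nonnegative, finitely supported coefficients and zero constant term. -/
lemma Eser_mass {F : PowerSeries ℝ} {K : ℕ} (hNN : NN F) (h0 : constantCoeff F = 0)
    (hFS : ∀ k, K < k → coeff k F = 0) :
    SAC (Eser F) ∧ NN (Eser F) ∧ mass (Eser F) = Real.exp (mass F) := by
  classical
  set a : ℕ × ℕ → ℝ := fun mk => coeff mk.2 (F ^ mk.1) / mk.1.factorial with ha
  have ha0 : 0 ≤ a := fun mk => div_nonneg (NN.pow hNN mk.1 mk.2) (by positivity)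
  have hrow : ∀ m, Summable (fun k => a (m, k)) := by
    intro m
    apply summable_of_ne_finset_zero (s := range (K * m + 1))
    intro k hk
    rw [Finset.mem_range, not_lt] at hk
    show coeff k (F ^ m) / m.factorial = 0
    rw [FS.pow hFS m k (by omega), zero_div]
  have hrowsum : ∀ m, (∑' k, a (m, k)) = mass F ^ m / m.factorial := by
    intro m
    show (∑' k, coeff k (F ^ m) / m.factorial) = _
    rw [tsum_div_const, ← mass_pow (FS.sac hFS) m]
    rfl
  have hsum2 : Summable (fun m => ∑' k, a (m, k)) := by
    refine (Real.summable_pow_div_factorial (mass F)).congr fun m => (hrowsum m).symm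
  have hA : Summable a := (summable_prod_of_nonneg ha0).2 ⟨hrow, hsum2⟩
  have hAval : ∑' p, a p = Real.exp (mass F) := by
    rw [Summable.tsum_prod' hA hrow]
    calc (∑' m, ∑' k, a (m, k)) = ∑' m, mass F ^ m / m.factorial :=
        tsum_congr hrowsum
      _ = Real.exp (mass F) := by
        rw [Real.exp_eq_exp_ℝ, NormedSpace.exp_eq_tsum_div]
  -- swapped family
  have hA' : Summable (fun km : ℕ × ℕ => a (km.2, km.1)) := by
    have := (Equiv.prodComm ℕ ℕ).summable_iff (f := a)
    rw [← this] at hA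
    exact hA
  have hcolfacts := (summable_prod_of_nonneg (f := fun km : ℕ × ℕ => a (km.2, km.1))
    (fun km => ha0 (km.2, km.1))).1 hA'
  have hEfun_eq : ∀ k, Efun F k = ∑' m, a (m, k) := by
    intro k
    rw [tsum_eq_sum (s := range (k + 1))]
    · rfl
    · intro m hm
      rw [Finset.mem_range, not_lt] at hm
      show coeff k (F ^ m) / m.factorial = 0
      rw [coeff_pow_eq_zero h0 (by omega), zero_div]
  have hsumEfun : Summable (Efun F) := by
    refine hcolfacts.2.congr fun k => (hEfun_eq k).symm
  have hmass : mass (Eser F) = Real.exp (mass F) := by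
    unfold mass
    calc (∑' k, coeff k (Eser F)) = ∑' k, ∑' m, a (m, k) := by
          refine tsum_congr fun k => ?_
          rw [coeff_Eser, hEfun_eq k]
      _ = ∑' km : ℕ × ℕ, a (km.2, km.1) := (Summable.tsum_prod' hA' hcolfacts.1).symm
      _ = ∑' p, a p := (Equiv.prodComm ℕ ℕ).tsum_eq (f := a)
      _ = Real.exp (mass F) := hAval
  refine ⟨?_, ?_, hmass⟩
  · apply sac_of_nn_summable
    · intro k
      rw [coeff_Eser]
      apply Finset.sum_nonneg
      intro m _
      exact div_nonneg (NN.pow hNN m k) (by positivity)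
    · exact hsumEfun.congr fun k => (coeff_Eser F k).symm
  · intro k
    rw [coeff_Eser]
    apply Finset.sum_nonneg
    intro m _
    exact div_nonneg (NN.pow hNN m k) (by positivity)

end LeCamAux

open PowerSeries Finset

set_option maxHeartbeats 1000000

noncomputable section LeCamAux5
namespace LeCamAux

lemma SAC.C_mul {F : PowerSeries ℝ} (r : ℝ) (h : SAC F) : SAC (C r * F) := by
  have : Summable (fun k => |r| * |coeff k F|) := h.mul_left |r|
  refine this.congr fun k => ?_
  rw [PowerSeries.coeff_C_mul, abs_mul]

lemma NN.C_mul {F : PowerSeries ℝ} {r : ℝ} (hr : 0 ≤ r) (h : NN F) : NN (C r * F) := by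
  intro k
  rw [PowerSeries.coeff_C_mul]
  exact mul_nonneg hr (h k)

lemma mass_C_mul (F : PowerSeries ℝ) (r : ℝ) : mass (C r * F) = r * mass F := by
  unfold mass
  rw [← tsum_mul_left]
  exact tsum_congr fun k => PowerSeries.coeff_C_mul k F r

lemma mass_sub {F G : PowerSeries ℝ} (hF : SAC F) (hG : SAC G) :
    mass (F - G) = mass F - mass G := by
  unfold mass
  rw [← Summable.tsum_sub hF.summable hG.summable]
  exact tsum_congr fun k => by rw [map_sub]

lemma mass_fs {F : PowerSeries ℝ} {K : ℕ} (h : ∀ k, K < k → coeff k F = 0) :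
    mass F = ∑ k ∈ range (K + 1), coeff k F := by
  apply tsum_eq_sum
  intro k hk
  rw [Finset.mem_range, not_lt] at hk
  exact h k (by omega)

/-- Single-factor Le Cam bound. -/
lemma single_factor_bound {A P : PowerSeries ℝ} {K : ℕ} (hNN : NN A)
    (h0 : constantCoeff A = 0) (hFS : ∀ k, K < k → coeff k A = 0)
    (hP0 : coeff 0 P = 1 - mass A)
    (hPk : ∀ k, 1 ≤ k → coeff k P = coeff k A)
    (hPFS : ∀ k, K < k → coeff k P = 0) :
    l1 (P - C (Real.exp (-mass A)) * Eser A) ≤ 2 * (mass A) ^ 2 := by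
  classical
  set π := mass A with hπ
  have hπ0 : 0 ≤ π := mass_nonneg hNN
  obtain ⟨hSE, hNE, hmE⟩ := Eser_mass hNN h0 hFS
  set G := C (Real.exp (-π)) * Eser A with hG
  have hSG : SAC G := SAC.C_mul _ hSE
  have hSP : SAC P := FS.sac hPFS
  have hSA : SAC A := FS.sac hFS
  have hmG : mass G = 1 := by
    rw [hG, mass_C_mul, hmE, ← Real.exp_add]
    simp [hπ]
  have hA00 : coeff 0 A = 0 := by
    simpa [PowerSeries.coeff_zero_eq_constantCoeff] using h0
  have hmP : mass P = 1 := by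
    rw [mass_fs hPFS, Finset.sum_range_succ', hP0]
    rw [hπ, mass_fs hFS, Finset.sum_range_succ', hA00]
    have : ∀ i ∈ range K, coeff (i + 1) P = coeff (i + 1) A := fun i _ =>
      hPk (i + 1) (by omega)
    rw [Finset.sum_congr rfl this]
    ring
  set d : ℕ → ℝ := fun k => coeff k (P - G) with hd
  have hdsum : Summable d := (SAC.sub hSP hSG).summable
  have hdabs : Summable (fun k => |d k|) := SAC.sub hSP hSG
  have htsum_d : ∑' k, d k = 0 := by
    have : ∑' k, d k = mass (P - G) := rfl
    rw [this, mass_sub hSP hSG, hmP, hmG, sub_self]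
  set dp : ℕ → ℝ := fun k => max (d k) 0 with hdp
  have hdp_le : ∀ k, dp k ≤ |d k| := fun k => by
    rw [hdp]; simp only
    exact max_le (le_abs_self _) (abs_nonneg _)
  have hdpsum : Summable dp :=
    Summable.of_nonneg_of_le (fun k => le_max_right _ _) hdp_le hdabs
  have habs_eq : ∀ k, |d k| = 2 * dp k - d k := fun k => by
    rcases le_or_gt 0 (d k) with h | h
    · rw [abs_of_nonneg h, hdp]; simp only [max_eq_left h]; ring
    · rw [abs_of_neg h, hdp]; simp only [max_eq_right h.le]; ring
  have hl1 : l1 (P - G) = 2 * ∑' k, dp k := by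
    unfold l1
    calc (∑' k, |coeff k (P - G)|) = ∑' k, (2 * dp k - d k) :=
        tsum_congr fun k => habs_eq k
      _ = 2 * (∑' k, dp k) - ∑' k, d k := by
          rw [Summable.tsum_sub (hdpsum.mul_left 2) hdsum, tsum_mul_left]
      _ = 2 * ∑' k, dp k := by rw [htsum_d]; ring
  -- pointwise bound on dp
  have hexp1 : 1 - π ≤ Real.exp (-π) := by
    have := Real.add_one_le_exp (-π)
    linarith
  have hdp_bound : ∀ k, dp k ≤ π * coeff k A := by
    intro k
    rcases Nat.eq_zero_or_pos k with rfl | hk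
    · have hd0 : d 0 = (1 - π) - Real.exp (-π) := by
        rw [hd]; simp only [map_sub]
        rw [hP0, hG, PowerSeries.coeff_C_mul, coeff_Eser]
        have : Efun A 0 = 1 := by
          unfold Efun
          simp
        rw [this, hπ]
        ring
      rw [hdp]; simp only
      rw [hA00, mul_zero]
      apply max_le _ le_rfl
      rw [hd0]
      linarith
    · have hEge : coeff k A ≤ Efun A k := by
        unfold Efun
        have h1mem : 1 ∈ range (k + 1) := Finset.mem_range.2 (by omega)
        have := Finset.single_le_sum
          (f := fun m => coeff k (A ^ m) / m.factorial)
          (fun m _ => div_nonneg (NN.pow hNN m k) (by positivity)) h1mem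
        simpa using this
      have hdk : d k ≤ (1 - Real.exp (-π)) * coeff k A := by
        rw [hd]; simp only [map_sub]
        rw [hPk k (by omega), hG, PowerSeries.coeff_C_mul, coeff_Eser]
        have h2 : Real.exp (-π) * coeff k A ≤ Real.exp (-π) * Efun A k :=
          mul_le_mul_of_nonneg_left hEge (Real.exp_pos _).le
        nlinarith
      have h3 : (1 - Real.exp (-π)) * coeff k A ≤ π * coeff k A := by
        apply mul_le_mul_of_nonneg_right _ (hNN k)
        linarith
      exact max_le (hdk.trans h3) (mul_nonneg hπ0 (hNN k))
  have hfinal : ∑' k, dp k ≤ π ^ 2 := by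
    have : (∑' k, π * coeff k A) = π * π := by
      rw [tsum_mul_left]; rfl
    calc (∑' k, dp k) ≤ ∑' k, π * coeff k A :=
        Summable.tsum_le_tsum hdp_bound hdpsum (hSA.summable.mul_left π)
      _ = π ^ 2 := by rw [this]; ring
  show l1 (P - G) ≤ 2 * π ^ 2
  rw [hl1]
  linarith

end LeCamAux

open PowerSeries Finset MeasureTheory ProbabilityTheory

set_option maxHeartbeats 1000000

noncomputable section LeCamAux6
namespace LeCamAux

variable {Ω : Type*} [MeasurableSpace Ω] {μ : Measure Ω} [IsProbabilityMeasure μ]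

lemma pmf_add {f g : Ω → ℕ} (hf : Measurable f) (hg : Measurable g)
    (hind : IndepFun f g μ) (k : ℕ) :
    (μ {ω | f ω + g ω = k}).toReal
      = ∑ ij ∈ antidiagonal k,
          (μ {ω | f ω = ij.1}).toReal * (μ {ω | g ω = ij.2}).toReal := by
  classical
  have hset : {ω | f ω + g ω = k}
      = ⋃ ij ∈ (antidiagonal k : Finset (ℕ × ℕ)), ({ω | f ω = ij.1} ∩ {ω | g ω = ij.2}) := by
    ext ω
    simp only [Set.mem_setOf_eq, Set.mem_iUnion, Set.mem_inter_iff, Finset.HasAntidiagonal.mem_antidiagonal]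
    constructor
    · intro h
      exact ⟨(f ω, g ω), h, rfl, rfl⟩
    · rintro ⟨ij, hij, h1, h2⟩
      omega
  have hmeas : ∀ ij : ℕ × ℕ, MeasurableSet ({ω | f ω = ij.1} ∩ {ω | g ω = ij.2}) := by
    intro ij
    exact (hf (measurableSet_singleton ij.1)).inter (hg (measurableSet_singleton ij.2))
  have hdisj : (↑(antidiagonal k : Finset (ℕ × ℕ)) : Set (ℕ × ℕ)).PairwiseDisjoint
      (fun ij => ({ω | f ω = ij.1} ∩ {ω | g ω = ij.2})) := by
    intro ij _ ij' _ hne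
    simp only [Function.onFun, Set.disjoint_left]
    rintro ω ⟨h1, h2⟩ ⟨h3, h4⟩
    apply hne
    ext
    · simp only [Set.mem_setOf_eq] at h1 h3; omega
    · simp only [Set.mem_setOf_eq] at h2 h4; omega
  rw [hset, measure_biUnion_finset hdisj (fun ij _ => hmeas ij)]
  rw [ENNReal.toReal_sum (fun ij _ => measure_ne_top μ _)]
  apply Finset.sum_congr rfl
  intro ij _
  have : μ ({ω | f ω = ij.1} ∩ {ω | g ω = ij.2})
      = μ {ω | f ω = ij.1} * μ {ω | g ω = ij.2} := by
    have := hind.measure_inter_preimage_eq_mul {ij.1} {ij.2}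
      (measurableSet_singleton _) (measurableSet_singleton _)
    simpa [Set.preimage, Set.mem_singleton_iff] using this
  rw [this, ENNReal.toReal_mul]

lemma pmf_zero_fun (k : ℕ) :
    (μ {ω : Ω | (0 : ℕ) = k}).toReal = coeff k (1 : PowerSeries ℝ) := by
  rw [PowerSeries.coeff_one]
  rcases eq_or_ne k 0 with rfl | hk
  · simp
  · rw [if_neg hk]
    have : {ω : Ω | (0 : ℕ) = k} = ∅ := by
      ext ω; simp [Ne.symm hk]
    rw [this]
    simp

lemma pmf_finset_sum {ι : Type*} [DecidableEq ι] {f : ι → Ω → ℕ}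
    (hmeas : ∀ i, Measurable (f i))
    (hindep : iIndepFun f μ) (s : Finset ι) (k : ℕ) :
    (μ {ω | ∑ i ∈ s, f i ω = k}).toReal
      = coeff k (∏ i ∈ s, PowerSeries.mk (fun j => (μ {ω | f i ω = j}).toReal)) := by
  induction s using Finset.cons_induction generalizing k with
  | empty =>
    simp only [Finset.sum_empty, Finset.prod_empty]
    exact pmf_zero_fun k
  | cons a s ha ih =>
    rw [Finset.prod_cons, PowerSeries.coeff_mul]
    have hsum_meas : Measurable (fun ω => ∑ i ∈ s, f i ω) := by
      apply Finset.measurable_sum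
      intro i _
      exact hmeas i
    have hind : IndepFun (f a) (fun ω => ∑ i ∈ s, f i ω) μ := by
      have h' := (hindep.indepFun_finsetSum_of_notMem hmeas ha).symm
      have he : (∑ j ∈ s, f j) = (fun ω => ∑ i ∈ s, f i ω) := by
        funext ω; simp [Finset.sum_apply]
      rwa [he] at h'
    have heq : ∀ ω, ∑ i ∈ Finset.cons a s ha, f i ω = f a ω + ∑ i ∈ s, f i ω := by
      intro ω
      rw [Finset.sum_cons]
    have : {ω | ∑ i ∈ Finset.cons a s ha, f i ω = k}
        = {ω | f a ω + ∑ i ∈ s, f i ω = k} := by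
      ext ω; rw [Set.mem_setOf_eq, Set.mem_setOf_eq, heq]
    rw [this, pmf_add (hmeas a) hsum_meas hind k]
    apply Finset.sum_congr rfl
    intro ij _
    rw [PowerSeries.coeff_mk, ih ij.2]

end LeCamAux

open PowerSeries Finset MeasureTheory ProbabilityTheory

set_option maxHeartbeats 1000000

noncomputable section LeCamAux7
namespace LeCamAux

variable {Ω : Type*} [MeasurableSpace Ω] {μ : Measure Ω} [IsProbabilityMeasure μ]

lemma pmf_total {W : Ω → ℕ} (hW : Measurable W) {K : ℕ} (hK : ∀ ω, W ω ≤ K) :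
    ∑ k ∈ range (K + 1), (μ {ω | W ω = k}).toReal = 1 := by
  classical
  have hset : (Set.univ : Set Ω) = ⋃ k ∈ (range (K + 1) : Finset ℕ), {ω | W ω = k} := by
    ext ω
    simp only [Set.mem_univ, Set.mem_iUnion, Set.mem_setOf_eq, Finset.mem_range, true_iff]
    exact ⟨W ω, by have := hK ω; omega, rfl⟩
  have hdisj : (↑(range (K + 1) : Finset ℕ) : Set ℕ).PairwiseDisjoint
      (fun k => {ω | W ω = k}) := by
    intro a _ b _ hab
    simp only [Function.onFun, Set.disjoint_left]
    rintro ω h1 h2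
    exact hab (by simp only [Set.mem_setOf_eq] at h1 h2; omega)
  have hM : μ (⋃ k ∈ (range (K + 1) : Finset ℕ), {ω | W ω = k})
      = ∑ k ∈ range (K + 1), μ {ω | W ω = k} :=
    measure_biUnion_finset hdisj (fun k _ => hW (measurableSet_singleton k))
  rw [← hset] at hM
  rw [← ENNReal.toReal_sum (fun k _ => measure_ne_top μ _), ← hM]
  simp

lemma pmf_compl_zero {W : Ω → ℕ} (hW : Measurable W) :
    (μ {ω | W ω ≠ 0}).toReal = 1 - (μ {ω | W ω = 0}).toReal := by
  have hset : {ω | W ω ≠ 0} = {ω | W ω = 0}ᶜ := by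
    ext ω; simp
  rw [hset, prob_compl_eq_one_sub (show MeasurableSet {ω | W ω = 0} from hW (measurableSet_singleton 0))]
  rw [ENNReal.toReal_sub_of_le prob_le_one ENNReal.one_ne_top]
  simp

lemma pmf_zero_of_gt {W : Ω → ℕ} (hW : Measurable W) {K : ℕ}
    (h : ∑ k ∈ range (K + 1), (μ {ω | W ω = k}).toReal = 1)
    {k : ℕ} (hk : K < k) : (μ {ω | W ω = k}).toReal = 0 := by
  classical
  set S : Set Ω := ⋃ k' ∈ (range (K + 1) : Finset ℕ), {ω | W ω = k'} with hS
  have hdisj : (↑(range (K + 1) : Finset ℕ) : Set ℕ).PairwiseDisjoint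
      (fun k' => {ω | W ω = k'}) := by
    intro a _ b _ hab
    simp only [Function.onFun, Set.disjoint_left]
    rintro ω h1 h2
    exact hab (by simp only [Set.mem_setOf_eq] at h1 h2; omega)
  have hmeasS : MeasurableSet S :=
    Finset.measurableSet_biUnion _ (fun k' _ => hW (measurableSet_singleton k'))
  have hMS : μ S = ∑ k' ∈ range (K + 1), μ {ω | W ω = k'} :=
    measure_biUnion_finset hdisj (fun k' _ => hW (measurableSet_singleton k'))
  have hMS1 : μ S = 1 := by
    have htr : (μ S).toReal = 1 := by
      rw [hMS, ENNReal.toReal_sum (fun k' _ => measure_ne_top μ _)]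
      exact h
    have hne : μ S ≠ ⊤ := measure_ne_top μ S
    rw [← ENNReal.ofReal_toReal hne, htr]
    simp
  have hcompl : μ Sᶜ = 0 := by
    rw [prob_compl_eq_one_sub hmeasS, hMS1]
    simp
  have hsub : {ω | W ω = k} ⊆ Sᶜ := by
    intro ω hω
    simp only [Set.mem_setOf_eq] at hω
    intro hmem
    rw [hS] at hmem
    simp only [Set.mem_iUnion, Set.mem_setOf_eq, Finset.mem_range] at hmem
    obtain ⟨k', hk', hWk'⟩ := hmem
    omega
  have : μ {ω | W ω = k} = 0 := le_antisymm (hcompl ▸ measure_mono hsub) (by positivity)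
  rw [this]
  simp

lemma pmf_Y {N : Ω → ℕ} {Z : ℕ → Ω → ℕ} (hN : Measurable N) (hZ : ∀ j, Measurable (Z j))
    (hindep : iIndepFun (fun i : Option ℕ => Option.elim i N Z) μ)
    {Y : Ω → ℕ} (hY : ∀ ω, Y ω = ∑ j ∈ Finset.range (N ω), Z j ω) (k : ℕ) :
    (μ {ω | Y ω = k}).toReal
      = ∑' m : ℕ, (μ {ω | N ω = m}).toReal *
          coeff k (∏ j ∈ range m, PowerSeries.mk (fun l => (μ {ω | Z j ω = l}).toReal)) := by
  classical
  set g : Option ℕ → Ω → ℕ := fun i => Option.elim i N Z with hg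
  have hgmeas : ∀ i, Measurable (g i) := by
    rintro (_ | j)
    · exact hN
    · exact hZ j
  have hset : {ω | Y ω = k}
      = ⋃ m : ℕ, ({ω | N ω = m} ∩ {ω | ∑ j ∈ range m, Z j ω = k}) := by
    ext ω
    simp only [Set.mem_setOf_eq, Set.mem_iUnion, Set.mem_inter_iff]
    constructor
    · intro h
      exact ⟨N ω, rfl, by rw [← h, hY ω]⟩
    · rintro ⟨m, h1, h2⟩
      rw [hY ω, h1]
      exact h2
  have hmeasm : ∀ m : ℕ, MeasurableSet ({ω | N ω = m} ∩ {ω | ∑ j ∈ range m, Z j ω = k}) := by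
    intro m
    refine (hN (measurableSet_singleton m)).inter ?_
    exact (Finset.measurable_sum (range m) (fun j _ => hZ j)) (measurableSet_singleton k)
  have hdisj : Pairwise (Function.onFun Disjoint
      (fun m => ({ω | N ω = m} ∩ {ω | ∑ j ∈ range m, Z j ω = k}))) := by
    intro a b hab
    simp only [Function.onFun, Set.disjoint_left]
    rintro ω ⟨h1, _⟩ ⟨h3, _⟩
    exact hab (by simp only [Set.mem_setOf_eq] at h1 h3; omega)
  rw [hset, measure_iUnion hdisj hmeasm, ENNReal.tsum_toReal_eq (fun m => measure_ne_top μ _)]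
  apply tsum_congr
  intro m
  -- independence of N and the partial sum
  have hindNS : IndepFun N (fun ω => ∑ j ∈ range m, Z j ω) μ := by
    have h' := (hindep.indepFun_finsetSum_of_notMem hgmeas
      (s := (range m).map Function.Embedding.some) (i := none) (by simp)).symm
    have he : (∑ i ∈ (range m).map Function.Embedding.some, g i)
        = (fun ω => ∑ j ∈ range m, Z j ω) := by
      funext ω
      rw [Finset.sum_apply]
      rw [Finset.sum_map]
      rfl
    rwa [he] at h'
  have hprod : μ ({ω | N ω = m} ∩ {ω | ∑ j ∈ range m, Z j ω = k})
      = μ {ω | N ω = m} * μ {ω | ∑ j ∈ range m, Z j ω = k} := by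
    have := hindNS.measure_inter_preimage_eq_mul {m} {k}
      (measurableSet_singleton _) (measurableSet_singleton _)
    simpa [Set.preimage, Set.mem_singleton_iff] using this
  rw [hprod, ENNReal.toReal_mul]
  congr 1
  -- pmf of the partial sum
  have := pmf_finset_sum (μ := μ) hgmeas hindep ((range m).map Function.Embedding.some) k
  have he2 : {ω | ∑ i ∈ (range m).map Function.Embedding.some, g i ω = k}
      = {ω | ∑ j ∈ range m, Z j ω = k} := by
    ext ω
    rw [Set.mem_setOf_eq, Set.mem_setOf_eq, Finset.sum_map]
    rfl
  rw [he2] at this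
  rw [this, Finset.prod_map]
  rfl

end LeCamAux

open PowerSeries Finset MeasureTheory ProbabilityTheory

set_option maxHeartbeats 4000000

noncomputable section LeCamAux8
namespace LeCamAux

lemma Eser_zero : Eser (0 : PowerSeries ℝ) = 1 := by
  ext k
  rw [coeff_Eser]
  unfold Efun
  rw [Finset.sum_eq_single 0]
  · simp
  · intro m _ hm
    rw [zero_pow hm, map_zero, zero_div]
  · intro h
    simp at h

lemma Eser_sum_eq_prod {ι : Type*} (s : Finset ι) (A : ι → PowerSeries ℝ)
    (h : ∀ i ∈ s, constantCoeff (A i) = 0) :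
    Eser (∑ i ∈ s, A i) = ∏ i ∈ s, Eser (A i) := by
  classical
  induction s using Finset.cons_induction with
  | empty => simpa using Eser_zero
  | cons a s ha ih =>
    rw [Finset.sum_cons, Finset.prod_cons]
    rw [Eser_add (h a (Finset.mem_cons_self a s)) (by
      rw [map_sum]
      exact Finset.sum_eq_zero fun i hi => h i (Finset.mem_cons_of_mem hi))]
    rw [ih fun i hi => h i (Finset.mem_cons_of_mem hi)]

end LeCamAux

open LeCamAux

/-- Le Cam's Poisson approximation theorem: let `X 0, ..., X (n-1)` be independent random
variables taking values in `{0,...,K}`, `X = Σ Xᵢ`, `πᵢ = Pr[Xᵢ ≠ 0]`,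
`V k = Σᵢ Pr[Xᵢ = k]`, `λ = Σᵢ πᵢ`. Let `Y = Σ_{j < N} Z j` be the compound Poisson
random variable where `N ~ Poisson(λ)` and the `Z j` are i.i.d. with
`Pr[Z j = k] = V k / λ` for `1 ≤ k ≤ K`, all independent. Then
`Σ_k |Pr[X = k] − Pr[Y = k]| ≤ 2 Σᵢ πᵢ²`. -/
theorem le_cam_poisson_approximation
    {Ω Ω' : Type*} [MeasurableSpace Ω] [MeasurableSpace Ω']
    (μ : Measure Ω) (ν : Measure Ω') [IsProbabilityMeasure μ] [IsProbabilityMeasure ν]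
    {n K : ℕ} (X : Fin n → Ω → ℕ)
    (hXmeas : ∀ i, Measurable (X i)) (hXK : ∀ i ω, X i ω ≤ K)
    (hXi : iIndepFun X μ)
    (π : Fin n → ℝ) (hπ : ∀ i, π i = (μ {ω | X i ω ≠ 0}).toReal)
    (V : ℕ → ℝ) (hV : ∀ k, V k = ∑ i, (μ {ω | X i ω = k}).toReal)
    (lam : ℝ) (hlam : lam = ∑ i, π i) (hlampos : 0 < lam)
    (N : Ω' → ℕ) (Z : ℕ → Ω' → ℕ)
    (hN : Measurable N) (hZ : ∀ j, Measurable (Z j))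
    (hNpmf : ∀ m : ℕ, (ν {ω | N ω = m}).toReal = Real.exp (-lam) * lam ^ m / m.factorial)
    (hZpmf : ∀ j, ∀ k, 1 ≤ k → k ≤ K → (ν {ω | Z j ω = k}).toReal = V k / lam)
    (hZ0 : ∀ j, (ν {ω | Z j ω = 0}).toReal = 0)
    (hindep : iIndepFun
      (fun i : Option ℕ => Option.elim i N Z) ν)
    (Y : Ω' → ℕ) (hY : ∀ ω, Y ω = ∑ j ∈ Finset.range (N ω), Z j ω) :
    (∑' k : ℕ, |(μ {ω | ∑ i, X i ω = k}).toReal - (ν {ω | Y ω = k}).toReal|)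
      ≤ 2 * ∑ i, (π i) ^ 2 := by
  classical
  have hlamne : lam ≠ 0 := ne_of_gt hlampos
  set p : Fin n → ℕ → ℝ := fun i k => (μ {ω | X i ω = k}).toReal with hp
  set Fser : Fin n → PowerSeries ℝ := fun i => PowerSeries.mk (p i) with hFser
  set AS : Fin n → PowerSeries ℝ :=
    fun i => PowerSeries.mk (fun k => if k = 0 then 0 else p i k) with hAS
  set Gser : Fin n → PowerSeries ℝ :=
    fun i => PowerSeries.C (Real.exp (-(π i))) * Eser (AS i) with hGser
  -- basic coefficient facts
  have hcF : ∀ i k, coeff k (Fser i) = p i k := fun i k => PowerSeries.coeff_mk k _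
  have hcA : ∀ i k, coeff k (AS i) = if k = 0 then 0 else p i k := fun i k =>
    PowerSeries.coeff_mk k _
  have hp_nonneg : ∀ i k, 0 ≤ p i k := fun i k => ENNReal.toReal_nonneg
  have hpK : ∀ i k, K < k → p i k = 0 := by
    intro i k hk
    have : {ω | X i ω = k} = ∅ := by
      ext ω
      simp only [Set.mem_setOf_eq, Set.mem_empty_iff_false, iff_false]
      intro h
      have := hXK i ω
      omega
    rw [hp]
    simp only [this, measure_empty]
    simp
  have hNN_A : ∀ i, NN (AS i) := by
    intro i k
    rw [hcA]
    split
    · exact le_rfl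
    · exact hp_nonneg i k
  have h0_A : ∀ i, constantCoeff (AS i) = 0 := by
    intro i
    rw [← PowerSeries.coeff_zero_eq_constantCoeff, hcA]
    simp
  have hFS_A : ∀ i, ∀ k, K < k → coeff k (AS i) = 0 := by
    intro i k hk
    rw [hcA, hpK i k hk]
    simp
  have hFS_F : ∀ i, ∀ k, K < k → coeff k (Fser i) = 0 := by
    intro i k hk
    rw [hcF, hpK i k hk]
  have hSF : ∀ i, SAC (Fser i) := fun i => FS.sac (hFS_F i)
  have hSA : ∀ i, SAC (AS i) := fun i => FS.sac (hFS_A i)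
  have hNN_F : ∀ i, NN (Fser i) := fun i k => by rw [hcF]; exact hp_nonneg i k
  -- total mass facts
  have hptot : ∀ i, ∑ k ∈ range (K + 1), p i k = 1 := fun i =>
    pmf_total (hXmeas i) (hXK i)
  have hmassF : ∀ i, mass (Fser i) = 1 := by
    intro i
    rw [mass_fs (hFS_F i)]
    calc ∑ k ∈ range (K + 1), coeff k (Fser i) = ∑ k ∈ range (K + 1), p i k :=
      Finset.sum_congr rfl fun k _ => hcF i k
    _ = 1 := hptot i
  have hp0 : ∀ i, p i 0 = 1 - π i := by
    intro i
    rw [hπ i, pmf_compl_zero (hXmeas i)]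
    rw [hp]
    ring
  have hsum_tail : ∀ i, ∑ j ∈ range K, p i (j + 1) = π i := by
    intro i
    have h1 := hptot i
    rw [Finset.sum_range_succ'] at h1
    rw [hp0 i] at h1
    linarith
  have hmassA : ∀ i, mass (AS i) = π i := by
    intro i
    rw [mass_fs (hFS_A i), Finset.sum_range_succ']
    have e1 : ∀ j ∈ range K, coeff (j + 1) (AS i) = p i (j + 1) := by
      intro j _
      rw [hcA]
      simp
    rw [Finset.sum_congr rfl e1, hcA]
    simp [hsum_tail i]
  have hπ_nonneg : ∀ i, 0 ≤ π i := fun i => by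
    rw [← hmassA i]; exact mass_nonneg (hNN_A i)
  -- Eser facts
  have hEser := fun i => Eser_mass (hNN_A i) (h0_A i) (hFS_A i)
  have hSG : ∀ i, SAC (Gser i) := fun i => SAC.C_mul _ (hEser i).1
  have hmassG : ∀ i, mass (Gser i) = 1 := by
    intro i
    rw [hGser]
    simp only
    rw [mass_C_mul, (hEser i).2.2, hmassA i, ← Real.exp_add]
    simp
  have hNN_G : ∀ i, NN (Gser i) := fun i =>
    NN.C_mul (Real.exp_pos _).le (hEser i).2.1
  have hl1F : ∀ i, l1 (Fser i) ≤ 1 := fun i =>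
    le_of_eq ((l1_eq_mass (hNN_F i)).trans (hmassF i))
  have hl1G : ∀ i, l1 (Gser i) ≤ 1 := fun i =>
    le_of_eq ((l1_eq_mass (hNN_G i)).trans (hmassG i))
  -- single factor bound
  have hfactor : ∀ i, l1 (Fser i - Gser i) ≤ 2 * π i ^ 2 := by
    intro i
    have := single_factor_bound (hNN_A i) (h0_A i) (hFS_A i)
      (P := Fser i) (by rw [hcF, hp0 i, hmassA i]) (fun k hk => by
        rw [hcF, hcA, if_neg (by omega)]) (hFS_F i)
    rw [hmassA i] at this
    exact this
  -- law of X
  have hX : ∀ k, (μ {ω | ∑ i, X i ω = k}).toReal = coeff k (∏ i, Fser i) := by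
    intro k
    exact pmf_finset_sum hXmeas hXi Finset.univ k
  -- the Z pmf
  set q : ℕ → ℝ := fun k => if k = 0 then 0 else if k ≤ K then V k / lam else 0 with hq'
  have hVtail : ∑ j ∈ range K, V (j + 1) = lam := by
    calc ∑ j ∈ range K, V (j + 1) = ∑ j ∈ range K, ∑ i, p i (j + 1) := by
          apply Finset.sum_congr rfl
          intro j _
          rw [hV]
      _ = ∑ i, ∑ j ∈ range K, p i (j + 1) := Finset.sum_comm
      _ = ∑ i, π i := Finset.sum_congr rfl fun i _ => hsum_tail i
      _ = lam := hlam.symm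
  have hZtot : ∀ j, ∑ k ∈ range (K + 1), (ν {ω | Z j ω = k}).toReal = 1 := by
    intro j
    rw [Finset.sum_range_succ', hZ0 j]
    have e1 : ∀ l ∈ range K, (ν {ω | Z j ω = l + 1}).toReal = V (l + 1) / lam := by
      intro l hl
      rw [Finset.mem_range] at hl
      exact hZpmf j (l + 1) (by omega) (by omega)
    rw [Finset.sum_congr rfl e1, ← Finset.sum_div, hVtail]
    field_simp
    simp
  have hqZ : ∀ j k, (ν {ω | Z j ω = k}).toReal = q k := by
    intro j k
    simp only [hq']
    rcases Nat.eq_zero_or_pos k with rfl | hk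
    · simpa using hZ0 j
    · rcases le_or_gt k K with hkK | hkK
      · rw [if_neg (by omega), if_pos hkK]
        exact hZpmf j k (by omega) hkK
      · rw [if_neg (by omega), if_neg (by omega)]
        exact pmf_zero_of_gt (hZ j) (hZtot j) hkK
  set Q : PowerSeries ℝ := PowerSeries.mk q with hQ
  set Atot : PowerSeries ℝ := ∑ i, AS i with hAtot
  have h0_Atot : constantCoeff Atot = 0 := by
    rw [hAtot, map_sum]
    exact Finset.sum_eq_zero fun i _ => h0_A i
  have hA_eq : Atot = PowerSeries.C lam * Q := by
    ext k
    rw [PowerSeries.coeff_C_mul, hQ, PowerSeries.coeff_mk, hAtot, map_sum]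
    simp only [hq']
    rcases Nat.eq_zero_or_pos k with rfl | hk
    · have hz : ∀ i ∈ Finset.univ, coeff (0:ℕ) (AS i) = 0 := fun i _ => by
        rw [hcA]; simp
      rw [Finset.sum_eq_zero hz]
      simp
    · rcases le_or_gt k K with hkK | hkK
      · rw [if_neg (by omega), if_pos hkK]
        have : ∀ i ∈ Finset.univ, coeff k (AS i) = p i k := fun i _ => by
          rw [hcA, if_neg (by omega)]
        rw [Finset.sum_congr rfl this]
        rw [hV k]
        field_simp
        rfl
      · rw [if_neg (by omega), if_neg (by omega), mul_zero]
        exact Finset.sum_eq_zero fun i _ => by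
          rw [hcA, if_neg (by omega), hpK i k hkK]
  -- law of Y
  have hprodG : ∏ i, Gser i = PowerSeries.C (Real.exp (-lam)) * Eser Atot := by
    rw [hGser]
    simp only
    rw [Finset.prod_mul_distrib, ← map_prod, ← Real.exp_sum]
    rw [← Eser_sum_eq_prod Finset.univ AS fun i _ => h0_A i, ← hAtot]
    congr 2
    rw [hlam, ← Finset.sum_neg_distrib]
  have hYlaw : ∀ k, (ν {ω | Y ω = k}).toReal = coeff k (∏ i, Gser i) := by
    intro k
    rw [pmf_Y hN hZ hindep hY k]
    have hmkq : ∀ j : ℕ, (PowerSeries.mk fun l => (ν {ω | Z j ω = l}).toReal) = Q := by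
      intro j
      rw [hQ]
      ext l
      rw [PowerSeries.coeff_mk, PowerSeries.coeff_mk, hqZ j l]
    have hterm : ∀ m : ℕ, (ν {ω | N ω = m}).toReal *
        coeff k (∏ j ∈ range m, PowerSeries.mk fun l => (ν {ω | Z j ω = l}).toReal)
        = Real.exp (-lam) * (coeff k (Atot ^ m) / m.factorial) := by
      intro m
      have e1 : (∏ j ∈ range m, PowerSeries.mk fun l => (ν {ω | Z j ω = l}).toReal)
          = Q ^ m := by
        rw [Finset.prod_congr rfl fun j _ => hmkq j, Finset.prod_const, Finset.card_range]
      have e2 : coeff k (Atot ^ m) = lam ^ m * coeff k (Q ^ m) := by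
        rw [hA_eq, mul_pow, ← map_pow, PowerSeries.coeff_C_mul]
      rw [e1, hNpmf m, e2]
      field_simp
    rw [tsum_congr hterm]
    have hsupp : ∀ m ∉ range (k + 1),
        Real.exp (-lam) * (coeff k (Atot ^ m) / m.factorial) = 0 := by
      intro m hm
      rw [Finset.mem_range, not_lt] at hm
      rw [coeff_pow_eq_zero h0_Atot (by omega)]
      simp
    rw [tsum_eq_sum hsupp, hprodG, PowerSeries.coeff_C_mul, coeff_Eser]
    unfold Efun
    rw [Finset.mul_sum]
  -- conclusion
  have hLHS : (∑' k : ℕ, |(μ {ω | ∑ i, X i ω = k}).toReal - (ν {ω | Y ω = k}).toReal|)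
      = l1 ((∏ i, Fser i) - ∏ i, Gser i) := by
    unfold l1
    apply tsum_congr
    intro k
    rw [hX k, hYlaw k, map_sub]
  rw [hLHS]
  calc l1 ((∏ i, Fser i) - ∏ i, Gser i) ≤ ∑ i, l1 (Fser i - Gser i) :=
      l1_prod_sub_prod Finset.univ Fser Gser (fun i _ => hSF i) (fun i _ => hSG i)
        (fun i _ => hl1F i) (fun i _ => hl1G i)
    _ ≤ ∑ i, 2 * π i ^ 2 := Finset.sum_le_sum fun i _ => hfactor i
    _ = 2 * ∑ i, π i ^ 2 := by rw [Finset.mul_sum]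
end LeCamAux8
end LeCamAux7
end LeCamAux6
end LeCamAux5
end LeCamAux4
end LeCamAux3
end LeCamAux2
end LeCamAux
end

section
/- Discretization preserves CDFs up to shift: let X_1,...,X_n be independent nonnegative random variables with Σ E[X_i] ≤ 3/ε, and let X̃_i = X_i + δ_i where the δ_i are independent of each other, E[δ_i] = 0 and Var[δ_i] ≤ 2ε⁴ E[X_i], and δ_i is determined by X_i. Then for every β ≥ 0, Pr[ΣX_i ≤ β] ≤ Pr[ΣX̃_i ≤ β + ε] + 6ε. -/
open MeasureTheory ProbabilityTheory

/-- Discretization preserves CDFs up to shift: let `X i` be independent nonnegative random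
variables with `Σ E[X i] ≤ 3/ε`, and `X̃ i = X i + δ i` where `δ i` is determined by `X i`,
has mean `0` and variance at most `2ε⁴ E[X i]`, with the pairs `(X i, δ i)` mutually
independent across `i`. Then `Pr[Σ X i ≤ β] ≤ Pr[Σ X̃ i ≤ β + ε] + 6ε` for all `β ≥ 0`. -/
theorem discretization_cdf_shift
    {Ω : Type*} [MeasurableSpace Ω] (μ : Measure Ω) [IsProbabilityMeasure μ]
    {n : ℕ} (X δ : Fin n → Ω → ℝ) (ε : ℝ) (hε : 0 < ε) (hε2 : ε < 1/2)
    (hXmeas : ∀ i, Measurable (X i)) (hXint : ∀ i, Integrable (X i) μ)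
    (hXnn : ∀ i ω, 0 ≤ X i ω)
    (g : Fin n → ℝ → ℝ) (hg : ∀ i, Measurable (g i))
    (hdet : ∀ i ω, δ i ω = g i (X i ω))
    (hδL2 : ∀ i, MemLp (δ i) 2 μ)
    (hδmean : ∀ i, μ[δ i] = 0)
    (hδvar : ∀ i, variance (δ i) μ ≤ 2 * ε ^ 4 * μ[X i])
    (hindep : iIndepFun (fun i ω => (X i ω, δ i ω)) μ)
    (hEsum : ∑ i, μ[X i] ≤ 3 / ε) :
    ∀ β : ℝ, 0 ≤ β →
      (μ {ω | ∑ i, X i ω ≤ β}).toReal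
        ≤ (μ {ω | ∑ i, (X i ω + δ i ω) ≤ β + ε}).toReal + 6 * ε := by
  intro β hβ
  -- independence of the δ i
  have hδindep : iIndepFun δ μ := by
    have := hindep.comp (fun _ => Prod.snd) (fun _ => measurable_snd)
    exact this
  set D : Ω → ℝ := fun ω => ∑ i, δ i ω with hD
  have hDL2 : MemLp (∑ i, δ i) 2 μ := memLp_finset_sum' _ (fun i _ => hδL2 i)
  have hDmean0 : ∫ ω, ∑ i, δ i ω ∂μ = 0 := by
    rw [integral_finset_sum _ (fun i _ => (hδL2 i).integrable one_le_two)]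
    simp [hδmean]
  have hDmean : μ[∑ i, δ i] = 0 := by simpa [Finset.sum_apply] using hDmean0
  -- variance of the sum
  have hvar : variance (∑ i, δ i) μ = ∑ i, variance (δ i) μ :=
    IndepFun.variance_sum (fun i _ => hδL2 i)
      (fun i _ j _ hij => hδindep.indepFun hij)
  have hvarbound : variance (∑ i, δ i) μ ≤ 6 * ε ^ 3 := by
    rw [hvar]
    calc ∑ i, variance (δ i) μ ≤ ∑ i, 2 * ε ^ 4 * μ[X i] :=
          Finset.sum_le_sum fun i _ => hδvar i
      _ = 2 * ε ^ 4 * ∑ i, μ[X i] := by rw [Finset.mul_sum]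
      _ ≤ 2 * ε ^ 4 * (3 / ε) := by
          apply mul_le_mul_of_nonneg_left hEsum
          positivity
      _ = 6 * ε ^ 3 := by field_simp; ring
  -- Chebyshev
  have hcheb : μ {ω | ε ≤ |(∑ i, δ i) ω - μ[∑ i, δ i]|}
      ≤ ENNReal.ofReal (variance (∑ i, δ i) μ / ε ^ 2) :=
    meas_ge_le_variance_div_sq hDL2 hε
  have hcheb' : (μ {ω | ε ≤ |D ω|}).toReal ≤ 6 * ε := by
    have h1 : {ω | ε ≤ |D ω|} = {ω | ε ≤ |(∑ i, δ i) ω - μ[∑ i, δ i]|} := by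
      ext ω; simp only [hD, Finset.sum_apply, Set.mem_setOf_eq, hDmean0, sub_zero]
    rw [h1]
    calc (μ {ω | ε ≤ |(∑ i, δ i) ω - μ[∑ i, δ i]|}).toReal
        ≤ (ENNReal.ofReal (variance (∑ i, δ i) μ / ε ^ 2)).toReal := by
          exact ENNReal.toReal_mono ENNReal.ofReal_ne_top hcheb
      _ ≤ variance (∑ i, δ i) μ / ε ^ 2 := le_of_eq (ENNReal.toReal_ofReal (div_nonneg (variance_nonneg _ _) (by positivity)))
      _ ≤ 6 * ε ^ 3 / ε ^ 2 := by
          apply div_le_div_of_nonneg_right hvarbound (by positivity)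
      _ = 6 * ε := by field_simp
  -- set inclusion
  have hsub : {ω | ∑ i, X i ω ≤ β}
      ⊆ {ω | ∑ i, (X i ω + δ i ω) ≤ β + ε} ∪ {ω | ε ≤ |D ω|} := by
    intro ω hω
    by_cases h : ε ≤ |D ω|
    · exact Or.inr h
    · left
      push_neg at h
      have hDω : D ω ≤ ε := le_of_lt (lt_of_abs_lt h)
      simp only [Set.mem_setOf_eq] at hω ⊢
      rw [Finset.sum_add_distrib]
      exact add_le_add hω hDω
  -- measurability of the bad set
  have hDmeas : Measurable D := by
    apply Finset.measurable_sum
    intro i _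
    have : δ i = g i ∘ X i := funext (hdet i)
    rw [this]; exact (hg i).comp (hXmeas i)
  have hkey : μ {ω | ∑ i, X i ω ≤ β}
      ≤ μ {ω | ∑ i, (X i ω + δ i ω) ≤ β + ε} + μ {ω | ε ≤ |D ω|} :=
    le_trans (measure_mono hsub) (measure_union_le _ _)
  have h1 : (μ {ω | ∑ i, X i ω ≤ β}).toReal
      ≤ (μ {ω | ∑ i, (X i ω + δ i ω) ≤ β + ε}).toReal + (μ {ω | ε ≤ |D ω|}).toReal := by
    rw [← ENNReal.toReal_add (measure_ne_top μ _) (measure_ne_top μ _)]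
    exact ENNReal.toReal_mono (by finiteness) hkey
  linarith
end

section
/- Let μ:[0,C]→[0,1] be α-Lipschitz, and let X and X̃ be nonnegative random variables with CDFs P and P̃ such that P(x) ≤ P̃(x+ε)+cε and P̃(x) ≤ P(x+ε)+cε for all x ∈ [0,C], and both are supported on [0,C]. Then |E[μ(X)] − E[μ(X̃)]| ≤ α(2c·C·ε + 2ε) + 2ε·sup|μ|. -/
set_option maxHeartbeats 1000000

open MeasureTheory ProbabilityTheory

lemma abel_aux (a b : ℕ → ℝ) (n : ℕ) :
    a 0 * b 0 + ∑ k ∈ Finset.range n, a k * (b (k+1) - b k)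
      = (∑ k ∈ Finset.range n, (a k - a (k+1)) * b (k+1)) + a n * b n := by
  induction n with
  | zero => simp
  | succ n ih => rw [Finset.sum_range_succ, Finset.sum_range_succ, ← add_assoc, ih]; ring

lemma telesum_aux (m : ℕ) :
    ∀ (G : ℕ → ℝ), (∀ j, G j ≤ 1) → (∀ j, 0 ≤ G j) → ∀ N : ℕ,
    ∑ k ∈ Finset.range N, (G (k+1+m) - G (k+1)) ≤ (m : ℝ) := by
  induction m with
  | zero => intro G _ _ N; simp
  | succ m ih =>
      intro G hG1 hG0 N
      calc ∑ k ∈ Finset.range N, (G (k+1+(m+1)) - G (k+1))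
          = (∑ k ∈ Finset.range N, ((fun j => G (j+1)) (k+1+m) - (fun j => G (j+1)) (k+1)))
            + ∑ k ∈ Finset.range N, ((fun k => G (k+1)) (k+1) - (fun k => G (k+1)) k) := by
            rw [← Finset.sum_add_distrib]
            refine Finset.sum_congr rfl (fun k _ => ?_)
            simp only
            have h : k+1+(m+1) = k+1+m+1 := by omega
            rw [h]; ring
        _ ≤ (m : ℝ) + (G (N+1) - G 1) := by
            gcongr
            · exact ih (fun j => G (j+1)) (fun j => hG1 _) (fun j => hG0 _) N
            · rw [Finset.sum_range_sub (fun k => G (k+1)) N]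
        _ ≤ (m : ℝ) + 1 := by have := hG1 (N+1); have := hG0 1; linarith
        _ = ((m + 1 : ℕ) : ℝ) := by push_cast; ring

/-- If the CDFs of `X` and `X'` (both supported on `[0,C]`) agree up to an `ε`-shift and
an additive error `c·ε`, and `u : [0,C] → [0,1]` is `α`-Lipschitz, then the expected
utilities differ by at most `α(2cCε + 2ε) + 2ε·sup|u|`. -/
theorem expected_utility_close_of_cdf_shift
    (C α ε c : ℝ) (hC : 0 < C) (hα : 0 < α) (hε : 0 < ε) (hc : 0 < c)
    (u : ℝ → ℝ) (hu : LipschitzOnWith (Real.toNNReal α) u (Set.Icc 0 C))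
    (hu01 : ∀ x ∈ Set.Icc (0:ℝ) C, u x ∈ Set.Icc (0:ℝ) 1)
    {Ω : Type*} [MeasurableSpace Ω] (μ : Measure Ω) [IsProbabilityMeasure μ]
    (X X' : Ω → ℝ) (hX : Measurable X) (hX' : Measurable X')
    (hXs : ∀ ω, X ω ∈ Set.Icc 0 C) (hX's : ∀ ω, X' ω ∈ Set.Icc 0 C)
    (hshift1 : ∀ x ∈ Set.Icc (0:ℝ) C,
      (μ {ω | X ω ≤ x}).toReal ≤ (μ {ω | X' ω ≤ x + ε}).toReal + c * ε)
    (hshift2 : ∀ x ∈ Set.Icc (0:ℝ) C,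
      (μ {ω | X' ω ≤ x}).toReal ≤ (μ {ω | X ω ≤ x + ε}).toReal + c * ε) :
    |μ[fun ω => u (X ω)] - μ[fun ω => u (X' ω)]|
      ≤ α * (2 * c * C * ε + 2 * ε)
        + 2 * ε * sSup ((fun x => |u x|) '' Set.Icc (0:ℝ) C) := by
  -- the sup term is nonnegative
  have hSnn : 0 ≤ sSup ((fun x => |u x|) '' Set.Icc (0:ℝ) C) := by
    have hmem : |u 0| ∈ (fun x => |u x|) '' Set.Icc (0:ℝ) C :=
      ⟨0, ⟨le_refl _, hC.le⟩, rfl⟩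
    have hbdd : BddAbove ((fun x => |u x|) '' Set.Icc (0:ℝ) C) := by
      refine ⟨1, fun z hz => ?_⟩
      obtain ⟨x, hx, rfl⟩ := hz
      have := hu01 x hx
      rw [abs_le]
      exact ⟨by linarith [this.1], this.2⟩
    exact le_trans (abs_nonneg _) (le_csSup hbdd hmem)
  -- grid parameters
  set m : ℕ := ⌈(2 + c*ε)/(c*C)⌉₊ with hm_def
  have hmpos : 0 < m := Nat.ceil_pos.mpr (by positivity)
  have hmge : (2 + c*ε)/(c*C) ≤ (m:ℝ) := Nat.le_ceil _
  set δ : ℝ := ε / m with hδ_def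
  have hδ : 0 < δ := by positivity
  have hδm : (m:ℝ) * δ = ε := by
    rw [hδ_def]; field_simp [Nat.cast_ne_zero.mpr hmpos.ne']
  have hδkey : δ * (2 + c*ε) ≤ c * C * ε := by
    rw [div_le_iff₀ (by positivity)] at hmge
    have h1 : δ * (2 + c*ε) ≤ δ * ((m:ℝ) * (c*C)) := by
      apply mul_le_mul_of_nonneg_left hmge hδ.le
    calc δ * (2 + c*ε) ≤ δ * ((m:ℝ) * (c*C)) := h1
      _ = ((m:ℝ) * δ) * (c*C) := by ring
      _ = ε * (c*C) := by rw [hδm]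
      _ = c * C * ε := by ring
  set N : ℕ := ⌈C/δ⌉₊ with hN_def
  have hNpos : 0 < N := Nat.ceil_pos.mpr (by positivity)
  have hNδ : C ≤ (N:ℝ) * δ := by
    have := Nat.le_ceil (C/δ)
    calc C = (C/δ) * δ := by field_simp
      _ ≤ (N:ℝ) * δ := by apply mul_le_mul_of_nonneg_right this hδ.le
  have hNδ' : (N:ℝ) * δ ≤ C + δ := by
    have h := Nat.ceil_lt_add_one (a := C/δ) (by positivity)
    have : (N:ℝ) ≤ C/δ + 1 := h.le
    calc (N:ℝ) * δ ≤ (C/δ + 1) * δ := by apply mul_le_mul_of_nonneg_right this hδ.le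
      _ = C + δ := by field_simp
  -- grid points
  set y : ℕ → ℝ := fun k => min ((k:ℝ)*δ) C with hy_def
  have hy0 : y 0 = 0 := by simp [hy_def, min_eq_left hC.le]
  have hymem : ∀ k, y k ∈ Set.Icc (0:ℝ) C := by
    intro k
    exact ⟨le_min (by positivity) hC.le, min_le_right _ _⟩
  have hymono : Monotone y := by
    intro i j hij
    exact min_le_min (mul_le_mul_of_nonneg_right (Nat.cast_le.mpr hij) hδ.le) le_rfl
  have hyN : ∀ j, N ≤ j → y j = C := by
    intro j hj
    apply min_eq_right
    calc C ≤ (N:ℝ)*δ := hNδ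
      _ ≤ (j:ℝ)*δ := mul_le_mul_of_nonneg_right (Nat.cast_le.mpr hj) hδ.le
  have hystep : ∀ k, y (k+1) - y k ≤ δ := by
    intro k
    have h1 : y (k+1) ≤ min ((k:ℝ)*δ + δ) (C + δ) := by
      apply min_le_min _ (by linarith)
      push_cast; ring_nf; exact le_refl _
    rw [min_add_add_right] at h1
    simp only [hy_def]
    linarith [h1]
  -- discrete CDFs
  set F : ℕ → ℝ := fun k => (μ (X ⁻¹' Set.Iic (y k))).toReal with hF_def
  set G : ℕ → ℝ := fun k => (μ (X' ⁻¹' Set.Iic (y k))).toReal with hG_def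
  have hmeasle : ∀ (s : Set Ω), (μ s).toReal ≤ 1 := by
    intro s
    calc (μ s).toReal ≤ (μ Set.univ).toReal :=
          ENNReal.toReal_mono (measure_ne_top _ _) (measure_mono (Set.subset_univ _))
      _ = 1 := by simp
  have hF0 : ∀ j, 0 ≤ F j := fun j => ENNReal.toReal_nonneg
  have hG0 : ∀ j, 0 ≤ G j := fun j => ENNReal.toReal_nonneg
  have hF1 : ∀ j, F j ≤ 1 := fun j => hmeasle _
  have hG1 : ∀ j, G j ≤ 1 := fun j => hmeasle _
  have hFmono : Monotone F := by
    intro i j hij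
    exact ENNReal.toReal_mono (measure_ne_top _ _)
      (measure_mono (Set.preimage_mono (Set.Iic_subset_Iic.mpr (hymono hij))))
  have hGmono : Monotone G := by
    intro i j hij
    exact ENNReal.toReal_mono (measure_ne_top _ _)
      (measure_mono (Set.preimage_mono (Set.Iic_subset_Iic.mpr (hymono hij))))
  have hFN : F N = 1 := by
    have : X ⁻¹' Set.Iic (y N) = Set.univ := by
      ext ω; simp [hyN N le_rfl, (hXs ω).2]
    simp [hF_def, this]
  have hGN : G N = 1 := by
    have : X' ⁻¹' Set.Iic (y N) = Set.univ := by
      ext ω; simp [hyN N le_rfl, (hX's ω).2]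
    simp [hG_def, this]
  -- shifted comparison
  have hshift_set : ∀ (Z : Ω → ℝ), (∀ ω, Z ω ∈ Set.Icc 0 C) → ∀ k : ℕ,
      (μ {ω | Z ω ≤ y k + ε}).toReal ≤ (μ (Z ⁻¹' Set.Iic (y (k+m)))).toReal := by
    intro Z hZs k
    by_cases h : ((k+m : ℕ):ℝ) * δ ≤ C
    · have hk : (k:ℝ)*δ ≤ C := by
        calc (k:ℝ)*δ ≤ ((k+m:ℕ):ℝ)*δ := by gcongr; push_cast; linarith [Nat.cast_nonneg (α := ℝ) m]
          _ ≤ C := h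
      have hyk : y k = (k:ℝ)*δ := min_eq_left hk
      have hykm : y (k+m) = ((k+m:ℕ):ℝ)*δ := min_eq_left h
      have heq : y k + ε = y (k+m) := by
        rw [hyk, hykm, ← hδm]; push_cast; ring
      apply le_of_eq
      have hseteq : {ω | Z ω ≤ y k + ε} = Z ⁻¹' Set.Iic (y (k+m)) := by
        ext ω
        simp only [Set.mem_setOf_eq, Set.mem_preimage, Set.mem_Iic, heq]
      rw [hseteq]
    · have hykm : y (k+m) = C := by
        apply min_eq_right
        linarith [lt_of_not_ge h]
      have : Z ⁻¹' Set.Iic (y (k+m)) = Set.univ := by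
        ext ω; simp [hykm, (hZs ω).2]
      rw [this]
      simp only [measure_univ, ENNReal.toReal_one]
      exact hmeasle _
  have hsF : ∀ k, F k ≤ G (k+m) + c*ε := by
    intro k
    have h1 := hshift1 (y k) (hymem k)
    have h2 := hshift_set X' hX's k
    have e1 : (μ {ω | X ω ≤ y k}).toReal = F k := rfl
    have e2 : (μ (X' ⁻¹' Set.Iic (y (k+m)))).toReal = G (k+m) := rfl
    linarith [h1, h2]
  have hsG : ∀ k, G k ≤ F (k+m) + c*ε := by
    intro k
    have h1 := hshift2 (y k) (hymem k)
    have h2 := hshift_set X hXs k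
    have e1 : (μ {ω | X' ω ≤ y k}).toReal = G k := rfl
    have e2 : (μ (X ⁻¹' Set.Iic (y (k+m)))).toReal = F (k+m) := rfl
    linarith [h1, h2]
  have hD : ∀ k, |F k - G k| ≤ (F (k+m) - F k) + (G (k+m) - G k) + c*ε := by
    intro k
    have h1 := hsF k
    have h2 := hsG k
    have h3 : F k ≤ F (k+m) := hFmono (Nat.le_add_right _ _)
    have h4 : G k ≤ G (k+m) := hGmono (Nat.le_add_right _ _)
    rw [abs_le]
    constructor <;> linarith
  -- step function
  set s : ℝ → ℝ := fun x => (Set.Iic (0:ℝ)).indicator (fun _ => u 0) x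
      + ∑ k ∈ Finset.range N, (Set.Ioc (y k) (y (k+1))).indicator (fun _ => u (y k)) x
    with hs_def
  -- integral of step function composed with a random variable
  have hstep_int : ∀ (Z : Ω → ℝ), Measurable Z → (∀ ω, Z ω ∈ Set.Icc 0 C) →
      (Integrable (fun ω => s (Z ω)) μ ∧
       ∫ ω, s (Z ω) ∂μ = (μ (Z ⁻¹' Set.Iic (y 0))).toReal * u 0
          + ∑ k ∈ Finset.range N,
            ((μ (Z ⁻¹' Set.Iic (y (k+1)))).toReal - (μ (Z ⁻¹' Set.Iic (y k))).toReal) * u (y k)) := by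
    intro Z hZ hZs
    have hind : ∀ (A : Set ℝ) (cst : ℝ) (ω : Ω),
        (Z ⁻¹' A).indicator (fun _ => cst) ω = A.indicator (fun _ => cst) (Z ω) := by
      intro A cst ω
      by_cases h : Z ω ∈ A
      · rw [Set.indicator_of_mem h, Set.indicator_of_mem (Set.mem_preimage.mpr h)]
      · rw [Set.indicator_of_notMem h,
          Set.indicator_of_notMem (fun hh => h (Set.mem_preimage.mp hh))]
    have hcomp : (fun ω => s (Z ω)) = fun ω => (Z ⁻¹' Set.Iic 0).indicator (fun _ => u 0) ω
        + ∑ k ∈ Finset.range N, (Z ⁻¹' Set.Ioc (y k) (y (k+1))).indicator (fun _ => u (y k)) ω := by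
      funext ω
      simp only [hs_def, hind]
    have hint1 : Integrable ((Z ⁻¹' Set.Iic 0).indicator (fun _ => u 0)) μ :=
      (integrable_const _).indicator (hZ measurableSet_Iic)
    have hint2 : ∀ k ∈ Finset.range N,
        Integrable ((Z ⁻¹' Set.Ioc (y k) (y (k+1))).indicator (fun _ => u (y k))) μ :=
      fun k _ => (integrable_const _).indicator (hZ measurableSet_Ioc)
    have hintsum : Integrable (fun ω => ∑ k ∈ Finset.range N,
        (Z ⁻¹' Set.Ioc (y k) (y (k+1))).indicator (fun _ => u (y k)) ω) μ :=
      integrable_finset_sum _ hint2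
    constructor
    · rw [hcomp]
      exact hint1.add hintsum
    · have hIoc : ∀ k : ℕ, (μ (Z ⁻¹' Set.Ioc (y k) (y (k+1)))).toReal
          = (μ (Z ⁻¹' Set.Iic (y (k+1)))).toReal - (μ (Z ⁻¹' Set.Iic (y k))).toReal := by
        intro k
        have hsub : Z ⁻¹' Set.Iic (y k) ⊆ Z ⁻¹' Set.Iic (y (k+1)) :=
          Set.preimage_mono (Set.Iic_subset_Iic.mpr (hymono (Nat.le_succ k)))
        have hdiff : Z ⁻¹' Set.Ioc (y k) (y (k+1))
            = Z ⁻¹' Set.Iic (y (k+1)) \ Z ⁻¹' Set.Iic (y k) := by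
          rw [← Set.preimage_diff, Set.Iic_sdiff_Iic]
        rw [hdiff, measure_diff hsub (hZ measurableSet_Iic).nullMeasurableSet (measure_ne_top _ _),
          ENNReal.toReal_sub_of_le (measure_mono hsub) (measure_ne_top _ _)]
      have e0 : Z ⁻¹' Set.Iic (y 0) = Z ⁻¹' Set.Iic 0 := by rw [hy0]
      have hterm : ∀ k ∈ Finset.range N,
          ∫ ω, (Z ⁻¹' Set.Ioc (y k) (y (k+1))).indicator (fun _ => u (y k)) ω ∂μ
          = ((μ (Z ⁻¹' Set.Iic (y (k+1)))).toReal - (μ (Z ⁻¹' Set.Iic (y k))).toReal)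
            * u (y k) := by
        intro k _
        rw [integral_indicator_const _ (hZ measurableSet_Ioc), smul_eq_mul, measureReal_def, hIoc k]
      rw [hcomp, integral_add hint1 hintsum, integral_finset_sum _ hint2,
        Finset.sum_congr rfl hterm, integral_indicator_const _ (hZ measurableSet_Iic),
        e0, smul_eq_mul, measureReal_def]
  -- pointwise approximation
  have hlip : ∀ a ∈ Set.Icc (0:ℝ) C, ∀ b ∈ Set.Icc (0:ℝ) C, |u a - u b| ≤ α * |a - b| := by
    intro a ha b hb
    have h := hu.dist_le_mul a ha b hb
    rw [Real.dist_eq, Real.dist_eq] at h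
    rwa [Real.coe_toNNReal α hα.le] at h
  have hpt : ∀ (Z : Ω → ℝ), (∀ ω, Z ω ∈ Set.Icc 0 C) → ∀ ω, |u (Z ω) - s (Z ω)| ≤ α * δ := by
    intro Z hZs ω
    set x := Z ω with hx_def
    have hx := hZs ω
    by_cases hx0 : x ≤ 0
    · have hxe : x = 0 := le_antisymm hx0 hx.1
      have hsum : ∑ k ∈ Finset.range N,
          (Set.Ioc (y k) (y (k+1))).indicator (fun _ => u (y k)) x = 0 := by
        apply Finset.sum_eq_zero
        intro k _
        apply Set.indicator_of_notMem
        intro hmem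
        have := hmem.1
        have h0 : (0:ℝ) ≤ y k := (hymem k).1
        rw [hxe] at this
        linarith
      have : s x = u 0 := by
        rw [hs_def]
        simp only
        rw [hsum, Set.indicator_of_mem (by simp [hxe] : x ∈ Set.Iic (0:ℝ))]
        ring
      rw [this, hxe]
      simp
      positivity
    · push_neg at hx0
      set K : ℕ := ⌈x/δ⌉₊ with hK_def
      have hK1 : 1 ≤ K := Nat.ceil_pos.mpr (by positivity)
      set k : ℕ := K - 1 with hk_def
      have hkK : k + 1 = K := by omega
      have hxu : x ≤ ((k:ℝ)+1) * δ := by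
        have h := Nat.le_ceil (x/δ)
        rw [← hK_def] at h
        have : (K:ℝ) = (k:ℝ) + 1 := by rw [← hkK]; push_cast; ring
        rw [this] at h
        calc x = (x/δ) * δ := by field_simp
          _ ≤ ((k:ℝ)+1) * δ := by apply mul_le_mul_of_nonneg_right h hδ.le
      have hxl : (k:ℝ) * δ < x := by
        have hlt : k < K := by omega
        rw [hK_def] at hlt
        rw [Nat.lt_ceil] at hlt
        calc (k:ℝ) * δ < (x/δ) * δ := by apply mul_lt_mul_of_pos_right hlt hδ
          _ = x := by field_simp
      have hkN : k < N := by
        have h1 : (k:ℝ) * δ < (N:ℝ) * δ := by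
          calc (k:ℝ)*δ < x := hxl
            _ ≤ C := hx.2
            _ ≤ (N:ℝ)*δ := hNδ
        have h2 : (k:ℝ) < (N:ℝ) := lt_of_mul_lt_mul_right h1 hδ.le
        exact_mod_cast h2
      have hyk : y k = (k:ℝ)*δ := min_eq_left (le_trans hxl.le hx.2)
      have hmemIoc : x ∈ Set.Ioc (y k) (y (k+1)) := by
        constructor
        · rw [hyk]; exact hxl
        · apply le_min _ hx.2
          push_cast
          exact hxu
      have hsx : s x = u (y k) := by
        rw [hs_def]
        simp only
        rw [Set.indicator_of_notMem (by simp only [Set.mem_Iic]; linarith : x ∉ Set.Iic (0:ℝ))]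
        rw [Finset.sum_eq_single_of_mem k (Finset.mem_range.mpr hkN)]
        · rw [Set.indicator_of_mem hmemIoc]; ring
        · intro j hj hjk
          apply Set.indicator_of_notMem
          intro hmem
          rcases lt_or_gt_of_ne hjk with hlt | hgt
          · have hjy : y (j+1) ≤ y k := hymono (by omega)
            have hykx : y k < x := by rw [hyk]; exact hxl
            have := hmem.2
            linarith
          · have hjy : y (k+1) ≤ y j := hymono (by omega)
            have := hmem.1
            have := hmemIoc.2
            linarith
      rw [hsx]
      have h1 := hlip x hx (y k) (hymem k)
      have h2 : |x - y k| ≤ δ := by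
        rw [abs_of_nonneg (by linarith [hmemIoc.1] : (0:ℝ) ≤ x - y k)]
        have h3 := hmemIoc.2
        have h4 := hystep k
        linarith
      calc |u x - u (y k)| ≤ α * |x - y k| := h1
        _ ≤ α * δ := mul_le_mul_of_nonneg_left h2 hα.le
  -- integrability of u ∘ Z
  have hucont : Continuous (fun x : ℝ => u (max 0 (min x C))) := by
    have hproj : Continuous (fun x : ℝ => max 0 (min x C)) := by fun_prop
    have hmapsto : ∀ x : ℝ, max 0 (min x C) ∈ Set.Icc (0:ℝ) C := by
      intro x
      exact ⟨le_max_left _ _, max_le hC.le (min_le_right _ _)⟩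
    exact (hu.continuousOn).comp_continuous hproj hmapsto
  have huint : ∀ (Z : Ω → ℝ), Measurable Z → (∀ ω, Z ω ∈ Set.Icc 0 C) →
      Integrable (fun ω => u (Z ω)) μ := by
    intro Z hZ hZs
    have heq : (fun ω => u (Z ω)) = fun ω => u (max 0 (min (Z ω) C)) := by
      funext ω
      congr 1
      rw [min_eq_left (hZs ω).2, max_eq_right (hZs ω).1]
    rw [heq]
    refine ⟨(hucont.measurable.comp hZ).aestronglyMeasurable, ?_⟩
    apply HasFiniteIntegral.of_bounded (C := 1)
    apply ae_of_all
    intro ω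
    have hb := hu01 _ ⟨le_max_left 0 (min (Z ω) C), max_le hC.le (min_le_right _ _)⟩
    rw [Real.norm_eq_abs, abs_le]
    exact ⟨by linarith [hb.1], hb.2⟩
  obtain ⟨hsintX, hsX_eq⟩ := hstep_int X hX hXs
  obtain ⟨hsintX', hsX'_eq⟩ := hstep_int X' hX' hX's
  have huX := huint X hX hXs
  have huX' := huint X' hX' hX's
  -- closeness of u∘Z and s∘Z integrals
  have hclose : ∀ (Z : Ω → ℝ), Measurable Z → (∀ ω, Z ω ∈ Set.Icc 0 C) →
      Integrable (fun ω => u (Z ω)) μ → Integrable (fun ω => s (Z ω)) μ →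
      |(∫ ω, u (Z ω) ∂μ) - ∫ ω, s (Z ω) ∂μ| ≤ α * δ := by
    intro Z hZ hZs hiu his
    rw [← integral_sub hiu his, ← Real.norm_eq_abs]
    have hb := norm_integral_le_of_norm_le_const (μ := μ)
      (f := fun ω => u (Z ω) - s (Z ω)) (C := α*δ) (ae_of_all _ fun ω => by
        rw [Real.norm_eq_abs]; exact hpt Z hZs ω)
    rwa [probReal_univ, mul_one] at hb
  have hcX := hclose X hX hXs huX hsintX
  have hcX' := hclose X' hX' hX's huX' hsintX'
  -- the Abel-summed difference
  have eF : ∀ k:ℕ, (μ (X ⁻¹' Set.Iic (y k))).toReal = F k := fun _ => rfl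
  have eG : ∀ k:ℕ, (μ (X' ⁻¹' Set.Iic (y k))).toReal = G k := fun _ => rfl
  have hTS : (∫ ω, s (X ω) ∂μ) - ∫ ω, s (X' ω) ∂μ
      = ∑ k ∈ Finset.range N, (u (y k) - u (y (k+1))) * (F (k+1) - G (k+1)) := by
    rw [hsX_eq, hsX'_eq]
    simp only [eF, eG]
    have habel := abel_aux (fun k => u (y k)) (fun k => F k - G k) N
    rw [hy0, hFN, hGN] at habel
    have hsplit : ∑ k ∈ Finset.range N, u (y k) * ((F (k+1) - G (k+1)) - (F k - G k))
        = (∑ k ∈ Finset.range N, (F (k+1) - F k) * u (y k))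
          - ∑ k ∈ Finset.range N, (G (k+1) - G k) * u (y k) := by
      rw [← Finset.sum_sub_distrib]
      exact Finset.sum_congr rfl fun k _ => by ring
    linear_combination habel - hsplit
  -- bound the Abel sum
  have hTb : |∑ k ∈ Finset.range N, (u (y k) - u (y (k+1))) * (F (k+1) - G (k+1))|
      ≤ α * δ * ((m:ℝ) + (m:ℝ) + (N:ℝ)*(c*ε)) := by
    calc |∑ k ∈ Finset.range N, (u (y k) - u (y (k+1))) * (F (k+1) - G (k+1))|
        ≤ ∑ k ∈ Finset.range N, |(u (y k) - u (y (k+1))) * (F (k+1) - G (k+1))| :=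
          Finset.abs_sum_le_sum_abs _ _
      _ ≤ ∑ k ∈ Finset.range N, (α * δ) *
            ((F (k+1+m) - F (k+1)) + ((G (k+1+m) - G (k+1)) + c*ε)) := by
          apply Finset.sum_le_sum
          intro k _
          rw [abs_mul]
          have hub : |u (y k) - u (y (k+1))| ≤ α * δ := by
            calc |u (y k) - u (y (k+1))| ≤ α * |y k - y (k+1)| :=
                  hlip (y k) (hymem k) (y (k+1)) (hymem (k+1))
              _ ≤ α * δ := by
                  apply mul_le_mul_of_nonneg_left _ hα.le
                  rw [abs_sub_comm, abs_of_nonneg (by linarith [hymono (Nat.le_succ k)] :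
                    (0:ℝ) ≤ y (k+1) - y k)]
                  exact hystep k
          have hDb : |F (k+1) - G (k+1)| ≤ (F (k+1+m) - F (k+1)) + ((G (k+1+m) - G (k+1)) + c*ε) := by
            have := hD (k+1)
            have e : k+1+m = (k+1)+m := rfl
            rw [e]
            linarith
          exact mul_le_mul hub hDb (abs_nonneg _) (by positivity)
      _ = (α * δ) * ((∑ k ∈ Finset.range N, (F (k+1+m) - F (k+1)))
            + ((∑ k ∈ Finset.range N, (G (k+1+m) - G (k+1))) + (N:ℝ)*(c*ε))) := by
          rw [← Finset.mul_sum]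
          congr 1
          rw [Finset.sum_add_distrib, Finset.sum_add_distrib, Finset.sum_const,
            Finset.card_range, nsmul_eq_mul]
      _ ≤ (α * δ) * ((m:ℝ) + ((m:ℝ) + (N:ℝ)*(c*ε))) := by
          apply mul_le_mul_of_nonneg_left _ (by positivity)
          gcongr
          · exact telesum_aux m F hF1 hF0 N
          · exact telesum_aux m G hG1 hG0 N
      _ = α * δ * ((m:ℝ) + (m:ℝ) + (N:ℝ)*(c*ε)) := by ring
  -- final assembly
  have htri : |(∫ ω, u (X ω) ∂μ) - ∫ ω, u (X' ω) ∂μ|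
      ≤ |(∫ ω, u (X ω) ∂μ) - ∫ ω, s (X ω) ∂μ|
        + |(∫ ω, s (X ω) ∂μ) - ∫ ω, s (X' ω) ∂μ|
        + |(∫ ω, s (X' ω) ∂μ) - ∫ ω, u (X' ω) ∂μ| := by
    have h1 := abs_sub_le (∫ ω, u (X ω) ∂μ) (∫ ω, s (X ω) ∂μ) (∫ ω, u (X' ω) ∂μ)
    have h2 := abs_sub_le (∫ ω, s (X ω) ∂μ) (∫ ω, s (X' ω) ∂μ) (∫ ω, u (X' ω) ∂μ)
    linarith
  have hcX'' : |(∫ ω, s (X' ω) ∂μ) - ∫ ω, u (X' ω) ∂μ| ≤ α * δ := by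
    rw [abs_sub_comm]; exact hcX'
  have hmain : α * δ * ((m:ℝ) + (m:ℝ) + (N:ℝ)*(c*ε)) ≤ 2*α*ε + α*c*ε*(C+δ) := by
    have h1 : α * δ * ((m:ℝ) + (m:ℝ)) = 2*α*ε := by
      have : δ * (m:ℝ) = ε := by rw [mul_comm]; exact hδm
      nlinarith [this]
    have h2 : α * δ * ((N:ℝ)*(c*ε)) ≤ α*c*ε*(C+δ) := by
      have h3 : (N:ℝ)*δ ≤ C + δ := hNδ'
      have h5 := mul_le_mul_of_nonneg_left h3 (show (0:ℝ) ≤ α*(c*ε) by positivity)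
      nlinarith [h5]
    nlinarith [h1, h2]
  have hfinal2 : α * δ * ((m:ℝ) + (m:ℝ) + (N:ℝ)*(c*ε)) + 2*(α*δ) ≤ α * (2*c*C*ε + 2*ε) := by
    have h4 : α * (δ * (2 + c*ε)) ≤ α * (c*C*ε) := mul_le_mul_of_nonneg_left hδkey hα.le
    nlinarith [hmain, h4]
  have hS : 0 ≤ 2 * ε * sSup ((fun x => |u x|) '' Set.Icc (0:ℝ) C) := by
    apply mul_nonneg (by positivity) hSnn
  rw [hTS] at htri
  show |(∫ ω, u (X ω) ∂μ) - ∫ ω, u (X' ω) ∂μ| ≤ _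
  linarith [htri, hcX, hTb, hcX'', hfinal2, hS]
end
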